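/- arXiv:1511.03234 — 8 statements merged into one kernel-verified Lean document; each statement's English description precedes it below -/
import Mathlib

section
/- A reduction structure 𝒥 is ordered if and only if it is noetherian, where noetherian means: for every commutative ring A and every marked set F on 𝒥 over A, every sequence of →_{F𝒥} reduction steps terminates. -/
open MvPolynomial

/-- Terms (monomials) in `n` variables, identified with their exponent vectors. -/
abbrev Term (n : ℕ) := Fin n →₀ ℕ

/-- A reduction structure `𝒥 = (M, λ, τ)`. -/
structure RedStruct (n : ℕ) where
  M : Finset (Term n)
  tau : Term n → Set (Term n)
  lam : Term n → Finset (Term n)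
  tau_orderIdeal : ∀ α ∈ M, ∀ η ∈ tau α, ∀ η' : Term n, η' ≤ η → η' ∈ tau α
  cover : ∀ β : Term n, (∃ α ∈ M, ∃ η, β = α + η) ↔ (∃ α ∈ M, ∃ η ∈ tau α, β = α + η)
  lam_tail : ∀ α ∈ M, ∀ γ ∈ lam α, ¬ ∃ η ∈ tau α, γ = α + η

namespace RedStruct

variable {n : ℕ}

/-- The cone of `x^α`. -/
def cone (𝒥 : RedStruct n) (α : Term n) : Set (Term n) := {β | ∃ η ∈ 𝒥.tau α, β = α + η}

/-- The semigroup ideal `J` generated by `M`. -/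
def idealJ (𝒥 : RedStruct n) : Set (Term n) := {β | ∃ α ∈ 𝒥.M, ∃ η, β = α + η}

def hasMaximalCones (𝒥 : RedStruct n) : Prop := ∀ α ∈ 𝒥.M, 𝒥.tau α = Set.univ

def hasDisjointCones (𝒥 : RedStruct n) : Prop :=
  ∀ α ∈ 𝒥.M, ∀ α' ∈ 𝒥.M, α ≠ α' → 𝒥.cone α ∩ 𝒥.cone α' = ∅

/-- `𝒥'` is a substructure of `𝒥`: same `M`, same tails, smaller multiplicative sets. -/
def IsSubstructure (𝒥' 𝒥 : RedStruct n) : Prop :=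
  𝒥'.M = 𝒥.M ∧ 𝒥'.lam = 𝒥.lam ∧ ∀ α ∈ 𝒥.M, 𝒥'.tau α ⊆ 𝒥.tau α

/-- An ordered reduction structure: there are a well-founded strictly (partially) ordered set
`(W, ≺)` and an ordering function `φ` with `φ(x^{γ+η}) ≺ φ(x^{α+η})` for all `x^α ∈ M`,
`x^γ ∈ λ_α`, `x^η ∈ τ_α`. -/
def IsOrdered (𝒥 : RedStruct n) : Prop :=
  ∃ (W : Type) (lt : W → W → Prop) (φ : Term n → W),
    IsStrictOrder W lt ∧ WellFounded lt ∧
      ∀ α ∈ 𝒥.M, ∀ γ ∈ 𝒥.lam α, ∀ η ∈ 𝒥.tau α, lt (φ (γ + η)) (φ (α + η))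

end RedStruct

variable {n : ℕ}

/-- A marked set on `𝒥` over the ring `A`: each `f_α = x^α + Σ_{γ ∈ λ_α} c γ x^γ`. -/
def IsMarkedSet {A : Type*} [CommRing A] (𝒥 : RedStruct n)
    (F : Term n → MvPolynomial (Fin n) A) : Prop :=
  ∀ α ∈ 𝒥.M, MvPolynomial.coeff α (F α) = 1 ∧
    ∀ β : Term n, MvPolynomial.coeff β (F α) ≠ 0 → β = α ∨ β ∈ 𝒥.lam α

/-- One base step of reduction, allowing multipliers from the family `σ`. -/
def RedStep {A : Type*} [CommRing A] (𝒥 : RedStruct n) (σ : Term n → Set (Term n))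
    (F : Term n → MvPolynomial (Fin n) A) (g h : MvPolynomial (Fin n) A) : Prop :=
  ∃ α ∈ 𝒥.M, ∃ η ∈ σ α, MvPolynomial.coeff (α + η) g ≠ 0 ∧
    h = g - MvPolynomial.monomial η (MvPolynomial.coeff (α + η) g) * F α

/-- The reduction relation `→_{F𝒥}`. -/
def Red {A : Type*} [CommRing A] (𝒥 : RedStruct n) (F : Term n → MvPolynomial (Fin n) A) :
    MvPolynomial (Fin n) A → MvPolynomial (Fin n) A → Prop :=
  RedStep 𝒥 𝒥.tau F

/-- The reflexive-transitive closure `→_*` of `→_{F𝒥}`. -/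
def RedStar {A : Type*} [CommRing A] (𝒥 : RedStruct n) (F : Term n → MvPolynomial (Fin n) A) :
    MvPolynomial (Fin n) A → MvPolynomial (Fin n) A → Prop :=
  Relation.ReflTransGen (Red 𝒥 F)

/-- A polynomial is reduced if its support is contained in `N(J)`. -/
def IsReducedPoly {A : Type*} [CommRing A] (𝒥 : RedStruct n)
    (l : MvPolynomial (Fin n) A) : Prop :=
  ∀ β ∈ l.support, β ∉ 𝒥.idealJ

/-- A relation is noetherian: there is no infinite chain of steps. -/
def RelNoetherian {X : Type*} (r : X → X → Prop) : Prop :=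
  ¬ ∃ f : ℕ → X, ∀ i, r (f i) (f (i + 1))

/-- `𝒥` is noetherian over `A`: for every marked set `F` on `𝒥` over `A`, every sequence
of `→_{F𝒥}` reduction steps terminates. -/
def RedStruct.IsNoetherianOver (𝒥 : RedStruct n) (A : Type*) [CommRing A] : Prop :=
  ∀ F : Term n → MvPolynomial (Fin n) A, IsMarkedSet 𝒥 F → RelNoetherian (Red 𝒥 F)

/-- `𝒥` is weakly noetherian over `A`: it has a noetherian substructure. -/
def RedStruct.IsWeaklyNoetherianOver (𝒥 : RedStruct n) (A : Type*) [CommRing A] : Prop :=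
  ∃ 𝒥' : RedStruct n, RedStruct.IsSubstructure 𝒥' 𝒥 ∧ 𝒥'.IsNoetherianOver A

/-- The set `σF = {x^η f_α : x^α ∈ M, x^η ∈ σ_α}`. -/
def tauF {A : Type*} [CommRing A] (𝒥 : RedStruct n) (σ : Term n → Set (Term n))
    (F : Term n → MvPolynomial (Fin n) A) : Set (MvPolynomial (Fin n) A) :=
  {p | ∃ α ∈ 𝒥.M, ∃ η ∈ σ α, p = MvPolynomial.monomial η (1 : A) * F α}

/-- The `A`-submodule `⟨σF⟩` generated by `σF`. -/
noncomputable def tauSpan {A : Type*} [CommRing A] (𝒥 : RedStruct n) (σ : Term n → Set (Term n))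
    (F : Term n → MvPolynomial (Fin n) A) : Submodule A (MvPolynomial (Fin n) A) :=
  Submodule.span A (tauF 𝒥 σ F)

/-- The `A`-submodule `⟨N(J)⟩` spanned by the terms outside `J`. -/
noncomputable def NJSpan (𝒥 : RedStruct n) (A : Type*) [CommRing A] :
    Submodule A (MvPolynomial (Fin n) A) :=
  Submodule.span A {p | ∃ β ∉ 𝒥.idealJ, p = MvPolynomial.monomial β (1 : A)}

/-- `F` is a marked basis: `(F) ⊕ ⟨N(J)⟩ = P` as `A`-modules. -/
def IsMarkedBasis {A : Type*} [CommRing A] (𝒥 : RedStruct n)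
    (F : Term n → MvPolynomial (Fin n) A) : Prop :=
  IsCompl (Submodule.restrictScalars A (Ideal.span (F '' ↑𝒥.M))) (NJSpan 𝒥 A)

/-- A representation of `g` by `σF`: `g = Σ c_(α,η) · x^η f_α` over finitely many
distinct pairs `(α, η)` with `x^α ∈ M`, `x^η ∈ σ_α` and nonzero coefficients. -/
def IsRepr {A : Type*} [CommRing A] (𝒥 : RedStruct n) (σ : Term n → Set (Term n))
    (F : Term n → MvPolynomial (Fin n) A) (c : (Term n × Term n) →₀ A)
    (g : MvPolynomial (Fin n) A) : Prop :=
  (∀ p ∈ c.support, p.1 ∈ 𝒥.M ∧ p.2 ∈ σ p.1) ∧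
    g = c.sum fun p a => MvPolynomial.monomial p.2 a * F p.1

/-- The S-polynomial `S(f_β, f_α) = (lcm(x^α,x^β)/x^α) f_α − (lcm(x^α,x^β)/x^β) f_β`,
written `SPoly F α β`. -/
noncomputable def SPoly {A : Type*} [CommRing A] (F : Term n → MvPolynomial (Fin n) A) (α β : Term n) :
    MvPolynomial (Fin n) A :=
  MvPolynomial.monomial ((α ⊔ β) - α) (1 : A) * F α -
    MvPolynomial.monomial ((α ⊔ β) - β) (1 : A) * F β

section AuxStmt1

variable {n : ℕ}

/-- Auxiliary relation: `s` is obtained from `t` by replacing the head `x^α` by a tail term. -/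
def Rrel (𝒥 : RedStruct n) (s t : Term n) : Prop :=
  ∃ α ∈ 𝒥.M, ∃ γ ∈ 𝒥.lam α, ∃ η ∈ 𝒥.tau α, t = α + η ∧ s = γ + η

lemma isOrdered_iff_wf (𝒥 : RedStruct n) : 𝒥.IsOrdered ↔ WellFounded (Rrel 𝒥) := by
  constructor
  · rintro ⟨W, lt, φ, hso, hwf, hkey⟩
    refine Subrelation.wf (r := InvImage lt φ) ?_ (InvImage.wf φ hwf)
    rintro s t ⟨α, hα, γ, hγ, η, hη, rfl, rfl⟩
    exact hkey α hα γ hγ η hη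
  · intro hwf
    haveI h1 : IsIrrefl (Term n) (Relation.TransGen (Rrel 𝒥)) := hwf.transGen.isIrrefl
    refine ⟨Term n, Relation.TransGen (Rrel 𝒥), id,
      { toIrrefl := h1, toIsTrans := ⟨fun _ _ _ => Relation.TransGen.trans⟩ },
      hwf.transGen, ?_⟩
    intro α hα γ hγ η hη
    exact Relation.TransGen.single ⟨α, hα, γ, hγ, η, hη, rfl, rfl⟩

lemma noeth_of_wf (𝒥 : RedStruct n) (hwf : WellFounded (Rrel 𝒥)) (A : Type) [CommRing A] :
    𝒥.IsNoetherianOver A := by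
  classical
  intro F hF
  haveI : IsWellFounded (Term n) (Rrel 𝒥) := ⟨hwf⟩
  obtain ⟨s, hsub, hwo⟩ := IsWellFounded.exists_well_order_ge (Rrel 𝒥)
  set μ : MvPolynomial (Fin n) A → (Term n →₀ ℕ) := fun g => Multiset.toFinsupp g.support.val
    with hμ
  have hcount : ∀ (g : MvPolynomial (Fin n) A) (β : Term n),
      μ g β = if MvPolynomial.coeff β g ≠ 0 then 1 else 0 := by
    intro g β
    simp only [hμ, Multiset.toFinsupp_apply]
    by_cases h : MvPolynomial.coeff β g ≠ 0
    · rw [if_pos h, Multiset.count_eq_one_of_mem g.support.nodup (by simpa using h)]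
    · rw [if_neg h, Multiset.count_eq_zero_of_notMem (by simpa using h)]
  have hwfLex : WellFounded (Finsupp.Lex (Function.swap s) ((· < ·) : ℕ → ℕ → Prop)) := by
    haveI : IsTrichotomous (Term n) (Function.swap s) := IsTrichotomous.swap s
    exact Finsupp.Lex.wellFounded' (fun k => Nat.not_lt_zero k) (Nat.lt_wfRel.wf)
      hwo.toIsWellFounded.wf
  have hirr : ∀ x : Term n, ¬ s x x := fun x => hwo.toIsWellFounded.wf.isIrrefl.irrefl x
  have hstep : ∀ g h, Red 𝒥 F g h → Finsupp.Lex (Function.swap s) (· < ·) (μ h) (μ g) := by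
    rintro g h ⟨α, hα, η, hη, hc, rfl⟩
    refine ⟨α + η, ?_, ?_⟩
    · intro j hj
      have hj' : s (α + η) j := hj
      have hzero : MvPolynomial.coeff j
          (MvPolynomial.monomial η (MvPolynomial.coeff (α + η) g) * F α) = 0 := by
        by_contra hne
        rw [MvPolynomial.coeff_monomial_mul'] at hne
        split_ifs at hne with hle
        · have hFc : MvPolynomial.coeff (j - η) (F α) ≠ 0 := right_ne_zero_of_mul hne
          have hj2 : j = (j - η) + η := (tsub_add_cancel_of_le hle).symm
          rcases (hF α hα).2 _ hFc with h' | h'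
          · rw [h'] at hj2
            rw [hj2] at hj'
            exact hirr _ hj'
          · have hR : Rrel 𝒥 j (α + η) := ⟨α, hα, j - η, h', η, hη, rfl, hj2⟩
            exact hirr j (IsTrans.trans (r := s) _ _ _ (hsub _ _ hR) hj')
        · exact hne rfl
      rw [hcount, hcount, MvPolynomial.coeff_sub, hzero, sub_zero]
    · have hhead : MvPolynomial.coeff (α + η)
          (MvPolynomial.monomial η (MvPolynomial.coeff (α + η) g) * F α)
          = MvPolynomial.coeff (α + η) g := by
        rw [add_comm α η, MvPolynomial.coeff_monomial_mul, (hF α hα).1, mul_one]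
      rw [hcount, hcount, MvPolynomial.coeff_sub, hhead, sub_self, if_neg (by simp), if_pos hc]
      exact Nat.zero_lt_one
  intro hcon
  obtain ⟨gs, hgs⟩ := hcon
  have key : ∀ x : Term n →₀ ℕ, ∀ i, μ (gs i) = x → False := by
    intro x
    refine hwfLex.induction (C := fun x => ∀ i, μ (gs i) = x → False) x ?_
    intro y IH i hy
    refine IH (μ (gs (i+1))) ?_ (i+1) rfl
    rw [← hy]
    exact hstep _ _ (hgs i)
  exact key _ 0 rfl

lemma wf_of_noeth (𝒥 : RedStruct n)
    (hN : ∀ (A : Type) [CommRing A], 𝒥.IsNoetherianOver A) : WellFounded (Rrel 𝒥) := by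
  classical
  by_contra hwf
  have hex : ∃ x, ¬ Acc (Rrel 𝒥) x := by
    by_contra h
    push_neg at h
    exact hwf ⟨h⟩
  obtain ⟨x0, hx0⟩ := hex
  let step : {x : Term n // ¬ Acc (Rrel 𝒥) x} → {x : Term n // ¬ Acc (Rrel 𝒥) x} := fun p =>
    ⟨Classical.choose (exists_not_acc_lt_of_not_acc p.2),
     (Classical.choose_spec (exists_not_acc_lt_of_not_acc p.2)).1⟩
  have hstepR : ∀ p, Rrel 𝒥 (step p).1 p.1 := fun p =>
    (Classical.choose_spec (exists_not_acc_lt_of_not_acc p.2)).2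
  set F0 : ℕ → {x : Term n // ¬ Acc (Rrel 𝒥) x} := fun i => step^[i] ⟨x0, hx0⟩ with hF0
  set f : ℕ → Term n := fun i => (F0 i).1 with hf
  have hRstep : ∀ i : ℕ, Rrel 𝒥 (f (i + 1)) (f i) := by
    intro i
    have h1 : F0 (i+1) = step (F0 i) := Function.iterate_succ_apply' step i _
    show Rrel 𝒥 (F0 (i+1)).1 (F0 i).1
    rw [h1]
    exact hstepR _
  choose a haM c hcL η hη hfa hfc using hRstep
  set A := Polynomial ℚ with hA
  set F : Term n → MvPolynomial (Fin n) A := fun α =>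
    MvPolynomial.monomial α 1 +
      ∑ γ ∈ (𝒥.lam α).erase α, MvPolynomial.monomial γ (Polynomial.X : A) with hFdef
  have hcoeffF : ∀ α β, MvPolynomial.coeff β (F α)
      = (if β = α then (1:A) else 0)
        + (if β ∈ (𝒥.lam α).erase α then (Polynomial.X : A) else 0) := by
    intro α β
    simp only [hFdef, MvPolynomial.coeff_add, MvPolynomial.coeff_monomial,
      MvPolynomial.coeff_sum]
    congr 1
    · simp [eq_comm]
    · simp [Finset.sum_ite_eq']
  have hmark : IsMarkedSet 𝒥 F := by
    intro α hα
    constructor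
    · rw [hcoeffF]; simp
    · intro β hβ
      rw [hcoeffF] at hβ
      by_cases h1 : β = α
      · exact Or.inl h1
      · by_cases h2 : β ∈ (𝒥.lam α).erase α
        · exact Or.inr (Finset.mem_erase.mp h2).2
        · simp [h1, h2] at hβ
  have hFdeg : ∀ α β, (MvPolynomial.coeff β (F α)).degree ≤ (1 : WithBot ℕ) := by
    intro α β; rw [hcoeffF]
    refine le_trans (Polynomial.degree_add_le _ _) ?_
    rw [max_le_iff]
    constructor <;> split_ifs <;>
      simp [Polynomial.degree_one, Polynomial.degree_X, Polynomial.degree_zero]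
  have hca : ∀ i, c i ≠ a i := by
    intro i hci
    have h0 : (0 : Term n) ∈ 𝒥.tau (a i) :=
      𝒥.tau_orderIdeal (a i) (haM i) (η i) (hη i) 0 (zero_le (a := η i))
    exact 𝒥.lam_tail (a i) (haM i) (c i) (hcL i) ⟨0, h0, by rw [hci, add_zero]⟩
  have hcerase : ∀ i, c i ∈ (𝒥.lam (a i)).erase (a i) :=
    fun i => Finset.mem_erase.2 ⟨hca i, hcL i⟩
  let g : ℕ → MvPolynomial (Fin n) A := fun i => Nat.rec (MvPolynomial.monomial (f 0) 1)
    (fun i gi => gi - MvPolynomial.monomial (η i) (MvPolynomial.coeff (f i) gi) * F (a i)) i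
  have hg0 : g 0 = MvPolynomial.monomial (f 0) (1:A) := rfl
  have hgs : ∀ i, g (i+1)
      = g i - MvPolynomial.monomial (η i) (MvPolynomial.coeff (f i) (g i)) * F (a i) :=
    fun i => rfl
  have hinv : ∀ i, (∀ β, (MvPolynomial.coeff β (g i)).degree ≤ (i : WithBot ℕ))
      ∧ (MvPolynomial.coeff (f i) (g i)).coeff i = (-1:ℚ)^i := by
    intro i
    induction i with
    | zero =>
      constructor
      · intro β
        rw [hg0, MvPolynomial.coeff_monomial]
        split_ifs
        · exact Polynomial.degree_one_le
        · simp
      · rw [hg0, MvPolynomial.coeff_monomial, if_pos rfl]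
        simp
    | succ i ih =>
      obtain ⟨ihdeg, ihtop⟩ := ih
      constructor
      · intro β
        rw [hgs, MvPolynomial.coeff_sub]
        refine le_trans (Polynomial.degree_sub_le _ _) ?_
        rw [max_le_iff]
        have hle1 : ((i : ℕ) : WithBot ℕ) ≤ ((i+1 : ℕ) : WithBot ℕ) := by
          exact_mod_cast Nat.le_succ i
        refine ⟨le_trans (ihdeg β) hle1, ?_⟩
        rw [MvPolynomial.coeff_monomial_mul']
        split_ifs
        · refine le_trans (Polynomial.degree_mul_le _ _) ?_
          refine le_trans (add_le_add (ihdeg _) (hFdeg _ _)) ?_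
          rw [show ((i+1 : ℕ) : WithBot ℕ) = (i : ℕ) + 1 by push_cast; ring]
        · simp
      · rw [hgs, MvPolynomial.coeff_sub, Polynomial.coeff_sub]
        have h1 : (MvPolynomial.coeff (f (i+1)) (g i)).coeff (i+1) = 0 :=
          Polynomial.coeff_eq_zero_of_degree_lt
            (lt_of_le_of_lt (ihdeg _) (by exact_mod_cast Nat.lt_succ_self i))
        have h2 : MvPolynomial.coeff (f (i+1))
            (MvPolynomial.monomial (η i) (MvPolynomial.coeff (f i) (g i)) * F (a i))
            = MvPolynomial.coeff (f i) (g i) * Polynomial.X := by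
          rw [hfc i, add_comm (c i) (η i), MvPolynomial.coeff_monomial_mul]
          congr 1
          rw [hcoeffF, if_neg (hca i), if_pos (hcerase i), zero_add]
        rw [h1, h2, Polynomial.coeff_mul_X, ihtop]
        ring
  have hne : ∀ i, MvPolynomial.coeff (f i) (g i) ≠ 0 := by
    intro i h0
    have h := (hinv i).2
    rw [h0, Polynomial.coeff_zero] at h
    exact pow_ne_zero i (by norm_num : (-1:ℚ) ≠ 0) h.symm
  have hred : ∀ i, Red 𝒥 F (g i) (g (i+1)) := by
    intro i
    refine ⟨a i, haM i, η i, hη i, ?_, ?_⟩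
    · rw [← hfa i]; exact hne i
    · rw [hgs i, hfa i]
  exact hN A F hmark ⟨g, hred⟩

end AuxStmt1

/-- a reduction structure is ordered iff it is noetherian (i.e. for every
commutative ring `A` and every marked set `F` on `𝒥` over `A`, every sequence of
`→_{F𝒥}` reduction steps terminates). -/
theorem stmt1 {n : ℕ} (𝒥 : RedStruct n) :
    𝒥.IsOrdered ↔ ∀ (A : Type) [CommRing A], 𝒥.IsNoetherianOver A := by
  rw [isOrdered_iff_wf]
  constructor
  · intro hwf A _
    exact noeth_of_wf 𝒥 hwf A
  · exact wf_of_noeth 𝒥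
end

section
/- Let F be a marked set over a weakly noetherian reduction structure 𝒥 and let g ∈ P. Then there exists a reduced polynomial l with g →_* l, and g − l has a representation by τF, i.e. g − l = Σ_{i=1}^r c_i x^{η_i} f_{α_i} with c_i ∈ A and the x^{η_i} f_{α_i} distinct elements of τF. -/
open MvPolynomial

variable {n : ℕ}

/-- A relation with no infinite chains has a well-founded flip. -/
lemma relNoetherian_wellFounded {X : Type*} {r : X → X → Prop} (h : RelNoetherian r) :
    WellFounded (fun a b => r b a) := by
  classical
  set r' : X → X → Prop := fun a b => r b a with hr'
  by_contra hwf
  apply h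
  have hx : ∃ x, ¬ Acc r' x := by
    by_contra h'
    push_neg at h'
    exact hwf ⟨h'⟩
  obtain ⟨x, hx⟩ := hx
  have step : ∀ y : {y : X // ¬ Acc r' y}, ∃ z : {y : X // ¬ Acc r' y}, r y.1 z.1 := by
    rintro ⟨y, hy⟩
    by_contra hz
    push_neg at hz
    refine hy (Acc.intro y fun z hz' => ?_)
    by_contra hacc
    exact hz ⟨z, hacc⟩ hz'
  choose next hnext using step
  refine ⟨fun n => (next^[n] ⟨x, hx⟩).1, fun i => ?_⟩
  simp only [Function.iterate_succ_apply']
  exact hnext _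

/-- over a weakly noetherian RS, every polynomial `g` has a reduced form `l`
obtained by `F`, and `g − l` has a representation by `τF`. -/
theorem stmt3 {n : ℕ} {A : Type} [CommRing A] (𝒥 : RedStruct n)
    (hwn : 𝒥.IsWeaklyNoetherianOver A)
    (F : Term n → MvPolynomial (Fin n) A) (hF : IsMarkedSet 𝒥 F)
    (g : MvPolynomial (Fin n) A) :
    ∃ l : MvPolynomial (Fin n) A, RedStar 𝒥 F g l ∧ IsReducedPoly 𝒥 l ∧
      ∃ c : (Term n × Term n) →₀ A, IsRepr 𝒥 𝒥.tau F c (g - l) := by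
  classical
  obtain ⟨𝒥', ⟨hM, hlam, htau⟩, hnoeth⟩ := hwn
  have hF' : IsMarkedSet 𝒥' F := by
    unfold IsMarkedSet at hF ⊢
    rw [hM, hlam]
    exact hF
  have wf : WellFounded (fun a b => Red 𝒥' F b a) :=
    relNoetherian_wellFounded (hnoeth F hF')
  induction g using WellFounded.induction wf with
  | _ g IH =>
    by_cases hred : IsReducedPoly 𝒥 g
    · refine ⟨g, Relation.ReflTransGen.refl, hred, 0, ?_, ?_⟩
      · simp
      · simp [Finsupp.sum_zero_index]
    · -- find a reducible term
      unfold IsReducedPoly at hred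
      push_neg at hred
      obtain ⟨β, hβsupp, hβJ⟩ := hred
      have hβJ' : ∃ α ∈ 𝒥'.M, ∃ η, β = α + η := by rw [hM]; exact hβJ
      obtain ⟨α, hα, η, hη, hβ⟩ := (𝒥'.cover β).mp hβJ'
      have hcoeff : MvPolynomial.coeff (α + η) g ≠ 0 := by
        rw [← hβ]
        exact MvPolynomial.mem_support_iff.mp hβsupp
      set h := g - MvPolynomial.monomial η (MvPolynomial.coeff (α + η) g) * F α with hh
      have hstep' : Red 𝒥' F g h := ⟨α, hα, η, hη, hcoeff, rfl⟩
      have hαM : α ∈ 𝒥.M := hM ▸ hα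
      have hητ : η ∈ 𝒥.tau α := htau α hαM hη
      obtain ⟨l, hstar, hlred, c, hcsupp, hcsum⟩ := IH h hstep'
      have hstep : Red 𝒥 F g h := ⟨α, hαM, η, hητ, hcoeff, rfl⟩
      refine ⟨l, Relation.ReflTransGen.head hstep hstar,
        hlred, c + Finsupp.single (α, η) (MvPolynomial.coeff (α + η) g), ?_, ?_⟩
      · intro p hp
        rcases Finset.mem_union.mp (Finsupp.support_add hp) with hp' | hp'
        · exact hcsupp p hp'
        · have : p = (α, η) := ((Finsupp.mem_support_single _ _ _).mp hp').1
          subst this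
          exact ⟨hαM, hητ⟩
      · rw [Finsupp.sum_add_index' (fun p => by simp) (fun p a b => by
            simp [map_add, add_mul]),
          Finsupp.sum_single_index (by simp), ← hcsum]
        ring
end

section
/- Let F be a marked set over a weakly noetherian reduction structure 𝒥 with disjoint cones, and let g ∈ P. Then there is exactly one polynomial l with supp(l) ⊆ N(J) and g − l ∈ ⟨τF⟩ (the canonical form of g); moreover g − l has a unique representation by τF, i.e. a unique expression g − l = Σ_{i=1}^r c_i x^{η_i} f_{α_i} with c_i ∈ A nonzero and the x^{η_i} f_{α_i} distinct elements of τF. -/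
open MvPolynomial

variable {n : ℕ}

section AuxCMR

variable {n : ℕ} {A : Type} [CommRing A]

/-- The combination `Σ_p c_p x^{p.2} f_{p.1}`. -/
noncomputable def CMRPhi (F : Term n → MvPolynomial (Fin n) A) (c : (Term n × Term n) →₀ A) :
    MvPolynomial (Fin n) A :=
  c.sum fun p a => MvPolynomial.monomial p.2 a * F p.1

/-- Valid supports: pairs `(α, η)` with `α ∈ M` and `η ∈ τ_α`. -/
def CMRValid (𝒥 : RedStruct n) (c : (Term n × Term n) →₀ A) : Prop :=
  ∀ p ∈ c.support, p.1 ∈ 𝒥.M ∧ p.2 ∈ 𝒥.tau p.1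

lemma CMRPhi_zero (F : Term n → MvPolynomial (Fin n) A) : CMRPhi F 0 = 0 :=
  Finsupp.sum_zero_index

lemma CMRPhi_sub (F : Term n → MvPolynomial (Fin n) A) (c c' : (Term n × Term n) →₀ A) :
    CMRPhi F (c - c') = CMRPhi F c - CMRPhi F c' := by
  apply Finsupp.sum_sub_index
  intro p b₁ b₂
  rw [map_sub, sub_mul]

lemma CMRPhi_add (F : Term n → MvPolynomial (Fin n) A) (c c' : (Term n × Term n) →₀ A) :
    CMRPhi F (c + c') = CMRPhi F c + CMRPhi F c' := by
  apply Finsupp.sum_add_index'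
  · intro p; rw [map_zero, zero_mul]
  · intro p b₁ b₂; rw [map_add, add_mul]

lemma CMRPhi_smul (F : Term n → MvPolynomial (Fin n) A) (a : A) (c : (Term n × Term n) →₀ A) :
    CMRPhi F (a • c) = a • CMRPhi F c := by
  rw [CMRPhi, CMRPhi, Finsupp.sum_smul_index', Finsupp.smul_sum]
  · apply Finsupp.sum_congr
    intro p _
    rw [← smul_mul_assoc, MvPolynomial.smul_monomial, smul_eq_mul]
  · intro p; rw [map_zero, zero_mul]

/-- Heads are pairwise distinct when cones are disjoint. -/
lemma CMR_head_inj {𝒥 : RedStruct n} (hd : 𝒥.hasDisjointCones) {p q : Term n × Term n}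
    (hp1 : p.1 ∈ 𝒥.M) (hp2 : p.2 ∈ 𝒥.tau p.1) (hq1 : q.1 ∈ 𝒥.M) (hq2 : q.2 ∈ 𝒥.tau q.1)
    (h : p.1 + p.2 = q.1 + q.2) : p = q := by
  have h1 : p.1 = q.1 := by
    by_contra hne
    have hdis := hd p.1 hp1 q.1 hq1 hne
    have hmem : p.1 + p.2 ∈ 𝒥.cone p.1 ∩ 𝒥.cone q.1 :=
      ⟨⟨p.2, hp2, rfl⟩, ⟨q.2, hq2, h⟩⟩
    rw [hdis] at hmem
    exact hmem
  have h2 : p.2 = q.2 := by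
    rw [h1] at h
    exact add_left_cancel h
  exact Prod.ext h1 h2

/-- Key uniqueness lemma: a `τF`-combination supported (as a polynomial) away from `J`
must be the trivial combination. -/
lemma CMR_repr_zero {𝒥 : RedStruct n} {F : Term n → MvPolynomial (Fin n) A}
    (hd : 𝒥.hasDisjointCones) (hne : RelNoetherian (Red 𝒥 F))
    (d : (Term n × Term n) →₀ A) (hval : CMRValid 𝒥 d)
    (hz : ∀ α ∈ 𝒥.M, ∀ η ∈ 𝒥.tau α, MvPolynomial.coeff (α + η) (CMRPhi F d) = 0) :
    d = 0 := by
  classical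
  by_contra hd0
  set L := d.support.toList with hL
  have hnd : L.Nodup := Finset.nodup_toList _
  have hmemL : ∀ p ∈ L, p ∈ d.support := fun p hp => Finset.mem_toList.1 hp
  set r := L.length with hrdef
  have hr : 0 < r := by
    rw [hrdef, hL, Finset.length_toList]
    exact Finset.card_pos.2 (Finsupp.support_nonempty_iff.2 hd0)
  set X : Term n × Term n → MvPolynomial (Fin n) A :=
    fun q => MvPolynomial.monomial q.2 (d q) * F q.1 with hX
  set PS : ℕ → MvPolynomial (Fin n) A := fun t => ((L.map X).take t).sum with hPS
  have hPSsucc : ∀ (t : ℕ) (ht : t < r), PS (t + 1) = PS t + X (L.get ⟨t, ht⟩) := by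
    intro t ht
    have ht' : t < (L.map X).length := by simp only [List.length_map]; exact ht
    simp only [hPS]
    rw [List.sum_take_succ _ t ht']
    congr 1
    simp
  have hPSr : PS r = CMRPhi F d := by
    have hlen : (L.map X).length = r := by simp [hrdef]
    simp only [hPS]
    rw [← hlen, List.take_length, hL, Finset.sum_map_toList]
    rfl
  set hpol := CMRPhi F d with hh
  have hvalid : ∀ t : Fin r, (L.get t).1 ∈ 𝒥.M ∧ (L.get t).2 ∈ 𝒥.tau (L.get t).1 :=
    fun t => hval _ (hmemL _ (L.get_mem _))
  set b : Fin r → A := fun t =>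
    d (L.get t) + MvPolynomial.coeff ((L.get t).1 + (L.get t).2) (PS t) with hb
  set g0 : MvPolynomial (Fin n) A :=
    ∑ t : Fin r, MvPolynomial.monomial ((L.get t).1 + (L.get t).2) (b t) with hg0
  have hg0coeff : ∀ t : Fin r, MvPolynomial.coeff ((L.get t).1 + (L.get t).2) g0 = b t := by
    intro t
    rw [hg0, MvPolynomial.coeff_sum]
    rw [Finset.sum_eq_single t]
    · simp [MvPolynomial.coeff_monomial]
    · intro s _ hst
      rw [MvPolynomial.coeff_monomial, if_neg]
      intro heq
      have hpq : L.get s = L.get t :=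
        CMR_head_inj hd (hvalid s).1 (hvalid s).2 (hvalid t).1 (hvalid t).2 heq
      exact hst (hnd.get_inj_iff.1 hpq)
    · intro hnot; exact absurd (Finset.mem_univ t) hnot
  set f : ℕ → MvPolynomial (Fin n) A :=
    fun N => g0 - (N / r) • hpol - PS (N % r) with hf
  have hstep : ∀ N, Red 𝒥 F (f N) (f (N + 1)) := by
    intro N
    have htr : N % r < r := Nat.mod_lt _ hr
    set t : Fin r := ⟨N % r, htr⟩ with htdef
    have hqs : L.get t ∈ d.support := hmemL _ (L.get_mem _)
    have hdq : d (L.get t) ≠ 0 := Finsupp.mem_support_iff.1 hqs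
    have hcoef : MvPolynomial.coeff ((L.get t).1 + (L.get t).2) (f N) = d (L.get t) := by
      simp only [hf]
      rw [MvPolynomial.coeff_sub, MvPolynomial.coeff_sub, MvPolynomial.coeff_smul,
        hz (L.get t).1 (hvalid t).1 (L.get t).2 (hvalid t).2]
      have hPSc : MvPolynomial.coeff ((L.get t).1 + (L.get t).2) (PS (N % r))
          = b t - d (L.get t) := by
        simp only [hb]
        ring
      rw [hg0coeff t, hPSc]
      simp
    refine ⟨(L.get t).1, (hvalid t).1, (L.get t).2, (hvalid t).2, ?_, ?_⟩
    · rw [hcoef]; exact hdq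
    · rw [hcoef]
      have hXq : MvPolynomial.monomial (L.get t).2 (d (L.get t)) * F (L.get t).1 = X (L.get t) :=
        rfl
      rw [hXq]
      have hNsplit : N = r * (N / r) + N % r := (Nat.div_add_mod N r).symm
      by_cases hcase : N % r + 1 < r
      · have key : N + 1 = (N % r + 1) + r * (N / r) := by
          conv_lhs => rw [hNsplit]
          ring
        have hdiv : (N + 1) / r = N / r := by
          rw [key, Nat.add_mul_div_left _ _ hr, Nat.div_eq_of_lt hcase, zero_add]
        have hmod : (N + 1) % r = N % r + 1 := by
          rw [key, Nat.add_mul_mod_self_left, Nat.mod_eq_of_lt hcase]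
        simp only [hf, hdiv, hmod]
        rw [hPSsucc (N % r) htr]
        abel
      · have hcase' : N % r + 1 = r := by omega
        have key : N + 1 = r * (N / r + 1) := by
          conv_lhs => rw [hNsplit]
          rw [Nat.mul_add, Nat.mul_one, Nat.add_assoc, hcase']
        have hdiv : (N + 1) / r = N / r + 1 := by
          rw [key, Nat.mul_div_cancel_left _ hr]
        have hmod : (N + 1) % r = 0 := by
          rw [key, Nat.mul_mod_right]
        have hcollapse : PS (N % r) + X (L.get t) = hpol := by
          rw [← hPSsucc (N % r) htr, hcase', hPSr]
        have hPS0 : PS 0 = 0 := by simp [hPS]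
        simp only [hf, hdiv, hmod]
        rw [hPS0, sub_zero, succ_nsmul, ← hcollapse]
        abel
  exact hne ⟨f, hstep⟩

/-- Every element of `⟨τF⟩` admits a valid representation. -/
lemma CMR_mem_span {𝒥 : RedStruct n} {F : Term n → MvPolynomial (Fin n) A}
    {x : MvPolynomial (Fin n) A} (hx : x ∈ tauSpan 𝒥 𝒥.tau F) :
    ∃ c, CMRValid 𝒥 c ∧ CMRPhi F c = x := by
  classical
  refine Submodule.span_induction (p := fun x _ => ∃ c, CMRValid 𝒥 c ∧ CMRPhi F c = x)
    ?_ ?_ ?_ ?_ hx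
  · rintro y ⟨α, hα, η, hη, rfl⟩
    refine ⟨Finsupp.single (α, η) 1, ?_, ?_⟩
    · intro p hp
      have hp' : p ∈ ({(α, η)} : Finset (Term n × Term n)) := Finsupp.support_single_subset hp
      have : p = (α, η) := Finset.mem_singleton.1 hp'
      subst this
      exact ⟨hα, hη⟩
    · rw [CMRPhi, Finsupp.sum_single_index]
      rw [map_zero, zero_mul]
  · exact ⟨0, fun p hp => absurd hp (by simp), CMRPhi_zero F⟩
  · rintro x y hx' hy' ⟨c, hc, rfl⟩ ⟨c', hc', rfl⟩
    refine ⟨c + c', ?_, (CMRPhi_add F c c')⟩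
    intro p hp
    rcases Finset.mem_union.1 (Finsupp.support_add hp) with h | h
    exacts [hc p h, hc' p h]
  · rintro a x hx' ⟨c, hc, rfl⟩
    exact ⟨a • c, fun p hp => hc p (Finsupp.support_smul hp), CMRPhi_smul F a c⟩

/-- Existence of a reduced form, from termination. -/
lemma CMR_exists_reduced {𝒥 : RedStruct n} {F : Term n → MvPolynomial (Fin n) A}
    (hne : RelNoetherian (Red 𝒥 F)) (g : MvPolynomial (Fin n) A) :
    ∃ l, IsReducedPoly 𝒥 l ∧ g - l ∈ tauSpan 𝒥 𝒥.tau F := by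
  classical
  by_contra hbad
  set Bad : MvPolynomial (Fin n) A → Prop :=
    fun x => ¬∃ l, IsReducedPoly 𝒥 l ∧ x - l ∈ tauSpan 𝒥 𝒥.tau F with hBad
  have hstep : ∀ x : {p : MvPolynomial (Fin n) A // Bad p},
      ∃ y : {p : MvPolynomial (Fin n) A // Bad p}, Red 𝒥 F x.1 y.1 := by
    rintro ⟨x, hx⟩
    have hred : ∃ h, Red 𝒥 F x h := by
      by_contra hno
      push_neg at hno
      apply hx
      refine ⟨x, ?_, by rw [sub_self]; exact Submodule.zero_mem _⟩
      intro β hβ hJ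
      obtain ⟨α, hα, η, hη, heq⟩ := (𝒥.cover β).1 hJ
      refine hno (x - MvPolynomial.monomial η (MvPolynomial.coeff (α + η) x) * F α)
        ⟨α, hα, η, hη, ?_, rfl⟩
      rw [← heq]
      exact MvPolynomial.mem_support_iff.1 hβ
    obtain ⟨h, hsteph⟩ := hred
    refine ⟨⟨h, ?_⟩, hsteph⟩
    rintro ⟨l, hl, hmem⟩
    apply hx
    refine ⟨l, hl, ?_⟩
    obtain ⟨α, hα, η, hη, hc, rfl⟩ := hsteph
    have hxh : x - (x - MvPolynomial.monomial η (MvPolynomial.coeff (α + η) x) * F α)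
        ∈ tauSpan 𝒥 𝒥.tau F := by
      have : x - (x - MvPolynomial.monomial η (MvPolynomial.coeff (α + η) x) * F α)
          = MvPolynomial.coeff (α + η) x • (MvPolynomial.monomial η (1 : A) * F α) := by
        rw [sub_sub_cancel, ← smul_mul_assoc, MvPolynomial.smul_monomial, smul_eq_mul, mul_one]
      rw [this]
      exact Submodule.smul_mem _ _ (Submodule.subset_span ⟨α, hα, η, hη, rfl⟩)
    have := Submodule.add_mem _ hxh hmem
    rwa [sub_add_sub_cancel] at this
  choose succ hsucc using hstep
  have hx0 : Bad g := hbad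
  set seq : ℕ → {p : MvPolynomial (Fin n) A // Bad p} :=
    fun N => succ^[N] ⟨g, hx0⟩ with hseq
  refine hne ⟨fun N => (seq N).1, fun N => ?_⟩
  show Red 𝒥 F (seq N).1 (seq (N + 1)).1
  have hit : seq (N + 1) = succ (seq N) := Function.iterate_succ_apply' succ N _
  rw [hit]
  exact hsucc (seq N)

/-- In a substructure of a disjoint-cones RS, the multiplicative sets agree on `M`. -/
lemma CMR_tau_sub {𝒥' 𝒥 : RedStruct n} (hsub : RedStruct.IsSubstructure 𝒥' 𝒥)
    (hd : 𝒥.hasDisjointCones) {α : Term n} (hα : α ∈ 𝒥.M) {η : Term n}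
    (hη : η ∈ 𝒥.tau α) : η ∈ 𝒥'.tau α := by
  have hα' : α ∈ 𝒥'.M := hsub.1 ▸ hα
  obtain ⟨a, ha', e, he', heq⟩ := (𝒥'.cover (α + η)).1 ⟨α, hα', η, rfl⟩
  have haM : a ∈ 𝒥.M := hsub.1 ▸ ha'
  have he : e ∈ 𝒥.tau a := hsub.2.2 a haM he'
  have hae : a = α := by
    by_contra hne'
    have hdis := hd α hα a haM (fun hh => hne' hh.symm)
    have hmem : α + η ∈ 𝒥.cone α ∩ 𝒥.cone a := ⟨⟨η, hη, rfl⟩, ⟨e, he, heq⟩⟩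
    rw [hdis] at hmem
    exact hmem
  subst hae
  have : η = e := add_left_cancel heq
  rwa [this]

end AuxCMR

/-- over a weakly noetherian RS with disjoint cones, every `g` has a unique
canonical form `l` with `supp(l) ⊆ N(J)` and `g − l ∈ ⟨τF⟩`, and `g − l` has a unique
representation by `τF`. -/
theorem stmt4 {n : ℕ} {A : Type} [CommRing A] (𝒥 : RedStruct n)
    (hwn : 𝒥.IsWeaklyNoetherianOver A) (hd : 𝒥.hasDisjointCones)
    (F : Term n → MvPolynomial (Fin n) A) (hF : IsMarkedSet 𝒥 F)
    (g : MvPolynomial (Fin n) A) :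
    (∃! l : MvPolynomial (Fin n) A, IsReducedPoly 𝒥 l ∧ g - l ∈ tauSpan 𝒥 𝒥.tau F) ∧
      ∀ l : MvPolynomial (Fin n) A, IsReducedPoly 𝒥 l → g - l ∈ tauSpan 𝒥 𝒥.tau F →
        ∃! c : (Term n × Term n) →₀ A, IsRepr 𝒥 𝒥.tau F c (g - l) := by
  classical
  obtain ⟨𝒥', hsub, hn'⟩ := hwn
  have hF' : IsMarkedSet 𝒥' F := by
    intro α hα'
    have hα : α ∈ 𝒥.M := hsub.1 ▸ hα'
    refine ⟨(hF α hα).1, fun β hβ => ?_⟩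
    rcases (hF α hα).2 β hβ with h | h
    · exact Or.inl h
    · right; rw [hsub.2.1]; exact h
  have hne : RelNoetherian (Red 𝒥 F) := by
    rintro ⟨f, hf⟩
    refine hn' F hF' ⟨f, fun i => ?_⟩
    obtain ⟨α, hα, η, hη, hc, heq⟩ := hf i
    exact ⟨α, hsub.1 ▸ hα, η, CMR_tau_sub hsub hd hα hη, hc, heq⟩
  have huniq : ∀ l l' : MvPolynomial (Fin n) A, IsReducedPoly 𝒥 l → IsReducedPoly 𝒥 l' →
      g - l ∈ tauSpan 𝒥 𝒥.tau F → g - l' ∈ tauSpan 𝒥 𝒥.tau F → l = l' := by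
    intro l l' hl hl' hm hm'
    have hmem : (g - l') - (g - l) ∈ tauSpan 𝒥 𝒥.tau F := Submodule.sub_mem _ hm' hm
    have heq : (g - l') - (g - l) = l - l' := by ring
    rw [heq] at hmem
    obtain ⟨c, hc, hphi⟩ := CMR_mem_span hmem
    have hc0 : c = 0 := by
      refine CMR_repr_zero hd hne c hc ?_
      intro α hα η hη
      rw [hphi, MvPolynomial.coeff_sub]
      have h1 : MvPolynomial.coeff (α + η) l = 0 := by
        by_contra hcc
        exact hl (α + η) (MvPolynomial.mem_support_iff.2 hcc) ⟨α, hα, η, rfl⟩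
      have h2 : MvPolynomial.coeff (α + η) l' = 0 := by
        by_contra hcc
        exact hl' (α + η) (MvPolynomial.mem_support_iff.2 hcc) ⟨α, hα, η, rfl⟩
      rw [h1, h2, sub_zero]
    rw [hc0, CMRPhi_zero] at hphi
    exact sub_eq_zero.1 hphi.symm
  constructor
  · obtain ⟨l, hl, hm⟩ := CMR_exists_reduced hne g
    exact ⟨l, ⟨hl, hm⟩, fun l' hl' => huniq l' l hl'.1 hl hl'.2 hm⟩
  · intro l hl hm
    obtain ⟨c, hc, hphi⟩ := CMR_mem_span hm
    refine ⟨c, ⟨hc, hphi.symm⟩, ?_⟩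
    rintro c' ⟨hc', hphi'⟩
    have hsubz : CMRPhi F (c' - c) = 0 := by
      rw [CMRPhi_sub]
      have e1 : CMRPhi F c' = g - l := hphi'.symm
      rw [e1, hphi, sub_self]
    have hz' : c' - c = 0 := by
      refine CMR_repr_zero hd hne _ ?_ ?_
      · intro p hp
        rcases Finset.mem_union.1 (Finsupp.support_sub hp) with h | h
        exacts [hc' p h, hc p h]
      · intro α hα η hη
        rw [hsubz, MvPolynomial.coeff_zero]
    exact sub_eq_zero.1 hz'
end

section
/- Let F be a marked set over a weakly noetherian reduction structure 𝒥. Then ⟨τF⟩ + ⟨N(J)⟩ = P. If moreover 𝒥 has disjoint cones, then ⟨τF⟩ ⊕ ⟨N(J)⟩ = P, and for all g, l ∈ P with supp(l) ⊆ N(J) one has: g − l ∈ ⟨τF⟩ if and only if g →_* l. -/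
open MvPolynomial

variable {n : ℕ}

namespace Stmt6Aux

open MvPolynomial

variable {n : ℕ}

/-- The head term of a pair `(α, η)`. -/
noncomputable def Hd (p : Term n × Term n) : Term n := p.1 + p.2

/-- A valid pair. -/
def PValid (𝒥 : RedStruct n) (p : Term n × Term n) : Prop :=
  p.1 ∈ 𝒥.M ∧ p.2 ∈ 𝒥.tau p.1

lemma hd_mem_idealJ (𝒥 : RedStruct n) {p : Term n × Term n} (hp : PValid 𝒥 p) :
    Hd p ∈ 𝒥.idealJ := ⟨p.1, hp.1, p.2, rfl⟩

/-- With disjoint cones, heads of valid pairs are injective. -/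
lemma hd_inj {𝒥 : RedStruct n} (hdc : 𝒥.hasDisjointCones) {p q : Term n × Term n}
    (hp : PValid 𝒥 p) (hq : PValid 𝒥 q) (h : Hd p = Hd q) : p = q := by
  obtain ⟨hp1, hp2⟩ := hp
  obtain ⟨hq1, hq2⟩ := hq
  have h1 : p.1 = q.1 := by
    by_contra hne
    have : Hd q ∈ 𝒥.cone p.1 ∩ 𝒥.cone q.1 := ⟨⟨p.2, hp2, h.symm⟩, ⟨q.2, hq2, rfl⟩⟩
    rw [hdc p.1 hp1 q.1 hq1 hne] at this
    exact this
  have h2 : p.2 = q.2 := by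
    have := h
    unfold Hd at this
    rw [h1] at this
    exact add_left_cancel this
  exact Prod.ext h1 h2

/-- Under disjoint cones, a substructure has the same multiplicative sets on `M`. -/
lemma tau_eq_of_substructure {𝒥' 𝒥 : RedStruct n} (hsub : RedStruct.IsSubstructure 𝒥' 𝒥)
    (hdc : 𝒥.hasDisjointCones) {α : Term n} (hα : α ∈ 𝒥.M) : 𝒥'.tau α = 𝒥.tau α := by
  obtain ⟨hM, hlam, htau⟩ := hsub
  apply Set.eq_of_subset_of_subset (htau α hα)
  intro η hη
  have hα' : α ∈ 𝒥'.M := hM ▸ hα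
  have hcov := (𝒥'.cover (α + η)).mp ⟨α, hα', η, rfl⟩
  obtain ⟨β, hβ, η', hη', heq⟩ := hcov
  have hβM : β ∈ 𝒥.M := hM ▸ hβ
  have : (⟨α, η⟩ : Term n × Term n) = ⟨β, η'⟩ := by
    apply hd_inj hdc (p := (α, η)) (q := (β, η'))
    · exact ⟨hα, hη⟩
    · exact ⟨hβM, htau β hβM hη'⟩
    · exact heq
  obtain ⟨h1, h2⟩ := Prod.mk.injEq _ _ _ _ ▸ this
  subst h1
  rw [show η = η' from h2]
  exact hη'

/-- Marked sets only depend on `M` and `lam`. -/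
lemma isMarkedSet_iff {𝒥' 𝒥 : RedStruct n} {A : Type} [CommRing A]
    (hsub : RedStruct.IsSubstructure 𝒥' 𝒥) (G : Term n → MvPolynomial (Fin n) A) :
    IsMarkedSet 𝒥 G ↔ IsMarkedSet 𝒥' G := by
  unfold IsMarkedSet
  rw [hsub.1, hsub.2.1]

/-- Under disjoint cones, the reduction relations of `𝒥` and a substructure agree. -/
lemma red_eq_of_substructure {𝒥' 𝒥 : RedStruct n} {A : Type} [CommRing A]
    (hsub : RedStruct.IsSubstructure 𝒥' 𝒥) (hdc : 𝒥.hasDisjointCones)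
    (G : Term n → MvPolynomial (Fin n) A) (g h : MvPolynomial (Fin n) A) :
    Red 𝒥 G g h ↔ Red 𝒥' G g h := by
  unfold Red RedStep
  constructor
  · rintro ⟨α, hα, η, hη, hc, hh⟩
    exact ⟨α, hsub.1 ▸ hα, η, (tau_eq_of_substructure hsub hdc hα).symm ▸ hη, hc, hh⟩
  · rintro ⟨α, hα, η, hη, hc, hh⟩
    have hαM : α ∈ 𝒥.M := hsub.1 ▸ hα
    exact ⟨α, hαM, η, (tau_eq_of_substructure hsub hdc hαM) ▸ hη, hc, hh⟩

/-- From noetherianity, the flipped relation is well-founded. -/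
lemma wf_of_relNoetherian {X : Type*} {r : X → X → Prop} (h : RelNoetherian r) :
    WellFounded (fun a b => r b a) := by
  classical
  by_contra hwf
  have hex : ∃ x, ¬ Acc (fun a b => r b a) x := by
    by_contra hx
    push_neg at hx
    exact hwf ⟨fun x => hx x⟩
  obtain ⟨x0, hx0⟩ := hex
  have step : ∀ x : {a // ¬ Acc (fun a b => r b a) a},
      ∃ y : {a // ¬ Acc (fun a b => r b a) a}, r x.1 y.1 := by
    intro x
    obtain ⟨b, hb1, hb2⟩ := exists_not_acc_lt_of_not_acc x.2
    exact ⟨⟨b, hb1⟩, hb2⟩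
  choose nxt hnxt using step
  let f : ℕ → {a // ¬ Acc (fun a b => r b a) a} :=
    fun i => Nat.recAux ⟨x0, hx0⟩ (fun _ p => nxt p) i
  refine h ⟨fun i => (f i).1, fun i => ?_⟩
  exact hnxt (f i)

/-- Elements of `NJSpan` are reduced. -/
lemma njSpan_reduced {𝒥 : RedStruct n} {A : Type} [CommRing A]
    {x : MvPolynomial (Fin n) A} (hx : x ∈ NJSpan 𝒥 A) : IsReducedPoly 𝒥 x := by
  let S : Submodule A (MvPolynomial (Fin n) A) :=
    { carrier := {p | ∀ β ∈ p.support, β ∉ 𝒥.idealJ}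
      add_mem' := by
        intro a b ha hb β hβ
        have := MvPolynomial.support_add (p := a) (q := b) hβ
        rcases Finset.mem_union.mp this with h | h
        · exact ha β h
        · exact hb β h
      zero_mem' := by intro β hβ; simp at hβ
      smul_mem' := by
        intro c p hp β hβ
        exact hp β (MvPolynomial.support_smul hβ) }
  have : NJSpan 𝒥 A ≤ S := by
    rw [NJSpan, Submodule.span_le]
    rintro p ⟨β, hβ, rfl⟩
    intro γ hγ
    have := MvPolynomial.support_monomial_subset hγ
    simp only [Finset.mem_singleton] at this
    rwa [this]
  exact this hx

/-- A reduced element: all coefficients at terms of `J` vanish. -/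
lemma coeff_eq_zero_of_reduced {𝒥 : RedStruct n} {A : Type} [CommRing A]
    {x : MvPolynomial (Fin n) A} (hx : IsReducedPoly 𝒥 x) {β : Term n}
    (hβ : β ∈ 𝒥.idealJ) : coeff β x = 0 := by
  by_contra h
  exact hx β (MvPolynomial.mem_support_iff.mpr h) hβ

/-- A polynomial with support in `N(J)` lies in `NJSpan`. -/
lemma mem_njSpan_of_reduced {𝒥 : RedStruct n} {A : Type} [CommRing A]
    {x : MvPolynomial (Fin n) A} (hx : IsReducedPoly 𝒥 x) : x ∈ NJSpan 𝒥 A := by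
  rw [← support_sum_monomial_coeff x]
  apply Submodule.sum_mem
  intro β hβ
  have : monomial β (coeff β x) = (coeff β x) • monomial β (1 : A) := by
    rw [smul_monomial, smul_eq_mul, mul_one]
  rw [this]
  exact Submodule.smul_mem _ _ (Submodule.subset_span ⟨β, hx β hβ, rfl⟩)

end Stmt6Aux
namespace Stmt6Aux

open MvPolynomial

variable {n : ℕ} {A : Type} [CommRing A]

/-- The value of a representation. -/
noncomputable def Phi (F : Term n → MvPolynomial (Fin n) A)
    (c : (Term n × Term n) →₀ A) : MvPolynomial (Fin n) A :=
  c.sum fun p a => monomial p.2 a * F p.1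

lemma phi_zero (F : Term n → MvPolynomial (Fin n) A) : Phi F 0 = 0 := by
  simp [Phi]

/-- Every element of `tauSpan` has a finsupp representation with valid pairs. -/
lemma exists_repr (𝒥 : RedStruct n) (σ : Term n → Set (Term n))
    (F : Term n → MvPolynomial (Fin n) A) {x : MvPolynomial (Fin n) A}
    (hx : x ∈ tauSpan 𝒥 σ F) :
    ∃ c : (Term n × Term n) →₀ A,
      (∀ p ∈ c.support, p.1 ∈ 𝒥.M ∧ p.2 ∈ σ p.1) ∧ x = Phi F c := by
  classical
  refine Submodule.span_induction ?_ ?_ ?_ ?_ hx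
  · rintro y ⟨α, hα, η, hη, rfl⟩
    refine ⟨Finsupp.single (α, η) 1, ?_, ?_⟩
    · intro p hp
      have hps := Finsupp.support_single_subset hp
      simp only [Finset.mem_singleton] at hps
      subst hps
      exact ⟨hα, hη⟩
    · rw [Phi, Finsupp.sum_single_index]
      simp
  · exact ⟨0, by simp, (phi_zero F).symm⟩
  · rintro x y hx hy ⟨c, hc, rfl⟩ ⟨d, hd, rfl⟩
    refine ⟨c + d, ?_, ?_⟩
    · intro p hp
      have := Finsupp.support_add hp
      rcases Finset.mem_union.mp this with h | h
      · exact hc p h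
      · exact hd p h
    · rw [Phi, Phi, Phi, Finsupp.sum_add_index]
      · intro p _; simp
      · intro p _ a b; rw [map_add, add_mul]
  · rintro a x hx ⟨c, hc, rfl⟩
    refine ⟨a • c, ?_, ?_⟩
    · intro p hp
      exact hc p (Finsupp.support_smul hp)
    · rw [Phi, Phi, Finsupp.sum_smul_index', Finsupp.smul_sum]
      · congr 1
        funext p b
        rw [← smul_mul_assoc, smul_monomial]
      · intro p; simp

/-- Each summand of a representation lies in the span. -/
lemma phi_mem (𝒥 : RedStruct n) (σ : Term n → Set (Term n))
    (F : Term n → MvPolynomial (Fin n) A) (c : (Term n × Term n) →₀ A)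
    (hc : ∀ p ∈ c.support, p.1 ∈ 𝒥.M ∧ p.2 ∈ σ p.1) :
    Phi F c ∈ tauSpan 𝒥 σ F := by
  rw [Phi, Finsupp.sum]
  apply Submodule.sum_mem
  intro p hp
  have : monomial p.2 (c p) * F p.1 = (c p) • (monomial p.2 (1 : A) * F p.1) := by
    rw [← smul_mul_assoc, smul_monomial, smul_eq_mul, mul_one]
  rw [this]
  exact Submodule.smul_mem _ _
    (Submodule.subset_span ⟨p.1, (hc p hp).1, p.2, (hc p hp).2, rfl⟩)

/-- A single generator is in the span. -/
lemma gen_mem (𝒥 : RedStruct n) (σ : Term n → Set (Term n))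
    (F : Term n → MvPolynomial (Fin n) A) {α η : Term n} (hα : α ∈ 𝒥.M) (hη : η ∈ σ α)
    (a : A) : monomial η a * F α ∈ tauSpan 𝒥 σ F := by
  have : monomial η a * F α = a • (monomial η (1 : A) * F α) := by
    rw [← smul_mul_assoc, smul_monomial, smul_eq_mul, mul_one]
  rw [this]
  exact Submodule.smul_mem _ _ (Submodule.subset_span ⟨α, hα, η, hη, rfl⟩)

/-- If no reduction step applies to `g` (w.r.t. a covering family), then `g` is reduced. -/
lemma reduced_of_no_step (𝒥 : RedStruct n) (F : Term n → MvPolynomial (Fin n) A)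
    {g : MvPolynomial (Fin n) A}
    (h : ¬ ∃ α ∈ 𝒥.M, ∃ η ∈ 𝒥.tau α, coeff (α + η) g ≠ 0) :
    IsReducedPoly 𝒥 g := by
  intro β hβ hJ
  obtain ⟨α, hα, η, rfl⟩ := hJ
  obtain ⟨α', hα', η', hη', heq⟩ := (𝒥.cover (α + η)).mp ⟨α, hα, η, rfl⟩
  refine h ⟨α', hα', η', hη', ?_⟩
  rw [← heq]
  exact MvPolynomial.mem_support_iff.mp hβ

/-- One direction of the final iff: reduction chains stay in the coset. -/
lemma sub_mem_of_redStar (𝒥 : RedStruct n) (F : Term n → MvPolynomial (Fin n) A)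
    {g l : MvPolynomial (Fin n) A} (h : RedStar 𝒥 F g l) :
    g - l ∈ tauSpan 𝒥 𝒥.tau F := by
  induction h with
  | refl => simp
  | tail hab hbc ih =>
    rename_i b c
    obtain ⟨α, hα, η, hη, hcoef, rfl⟩ := hbc
    have h1 : g - (b - monomial η (coeff (α + η) b) * F α)
        = (g - b) + monomial η (coeff (α + η) b) * F α := by ring
    rw [h1]
    exact Submodule.add_mem _ ih (gen_mem 𝒥 𝒥.tau F hα hη _)

end Stmt6Aux
namespace Stmt6Aux

open MvPolynomial

variable {n : ℕ} {A : Type} [CommRing A]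

lemma idealJ_eq {𝒥' 𝒥 : RedStruct n} (hsub : RedStruct.IsSubstructure 𝒥' 𝒥) :
    𝒥'.idealJ = 𝒥.idealJ := by
  unfold RedStruct.idealJ
  rw [hsub.1]

/-- Part 1: `⟨τF⟩ + ⟨N(J)⟩ = P`. -/
lemma sup_eq_top (𝒥 : RedStruct n) (hwn : 𝒥.IsWeaklyNoetherianOver A)
    (F : Term n → MvPolynomial (Fin n) A) (hF : IsMarkedSet 𝒥 F) :
    tauSpan 𝒥 𝒥.tau F ⊔ NJSpan 𝒥 A = ⊤ := by
  classical
  obtain ⟨𝒥', hsub, hnoe⟩ := hwn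
  have hFm' : IsMarkedSet 𝒥' F := (isMarkedSet_iff hsub F).mp hF
  have hwf := wf_of_relNoetherian (hnoe F hFm')
  rw [eq_top_iff]
  intro g _
  refine hwf.induction (C := fun g => g ∈ tauSpan 𝒥 𝒥.tau F ⊔ NJSpan 𝒥 A) g ?_
  intro g ih
  by_cases hstep : ∃ α ∈ 𝒥'.M, ∃ η ∈ 𝒥'.tau α, coeff (α + η) g ≠ 0
  · obtain ⟨α, hα, η, hη, hc⟩ := hstep
    have hred : Red 𝒥' F g (g - monomial η (coeff (α + η) g) * F α) :=
      ⟨α, hα, η, hη, hc, rfl⟩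
    have hmem := ih _ hred
    have hg : g = (g - monomial η (coeff (α + η) g) * F α)
        + monomial η (coeff (α + η) g) * F α := by ring
    rw [hg]
    refine Submodule.add_mem _ hmem (Submodule.mem_sup_left ?_)
    have hαM : α ∈ 𝒥.M := hsub.1 ▸ hα
    exact gen_mem 𝒥 𝒥.tau F hαM (hsub.2.2 α hαM hη) _
  · have hred' : IsReducedPoly 𝒥' g := reduced_of_no_step 𝒥' F hstep
    have hred : IsReducedPoly 𝒥 g := by
      intro β hβ
      rw [← idealJ_eq hsub]
      exact hred' β hβ
    exact Submodule.mem_sup_right (mem_njSpan_of_reduced hred)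

end Stmt6Aux
namespace Stmt6Aux

open MvPolynomial

variable {n : ℕ} {A : Type} [CommRing A]

/-- Noetherianity descends to quotient rings. -/
lemma quotient_noe (𝒥 : RedStruct n)
    (hnoe : ∀ G : Term n → MvPolynomial (Fin n) A,
      IsMarkedSet 𝒥 G → RelNoetherian (Red 𝒥 G)) (I : Ideal A) :
    ∀ G' : Term n → MvPolynomial (Fin n) (A ⧸ I),
      IsMarkedSet 𝒥 G' → RelNoetherian (Red 𝒥 G') := by
  classical
  intro G' hG'
  set φ := Ideal.Quotient.mk I with hφ
  have hsurj : Function.Surjective φ := Ideal.Quotient.mk_surjective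
  -- a coefficient lift
  have hlift : ∀ d : A ⧸ I, ∃ a : A, φ a = d := hsurj
  choose lf hlf using hlift
  -- lift of the marked set
  set G : Term n → MvPolynomial (Fin n) A := fun α =>
    monomial α (1 : A) + ∑ γ ∈ (𝒥.lam α).erase α, monomial γ (lf (coeff γ (G' α)))
    with hGdef
  have hGcoeffα : ∀ α : Term n, coeff α (G α) = 1 := by
    intro α
    rw [hGdef]
    simp only [coeff_add, MvPolynomial.coeff_sum]
    have h0 : ∀ γ ∈ (𝒥.lam α).erase α, coeff α (monomial γ (lf (coeff γ (G' α)))) = 0 := by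
      intro γ hγ
      rw [coeff_monomial, if_neg (Finset.ne_of_mem_erase hγ)]
    rw [Finset.sum_eq_zero h0, add_zero, coeff_monomial, if_pos rfl]
  have hGmarked : IsMarkedSet 𝒥 G := by
    intro α hα
    refine ⟨hGcoeffα α, ?_⟩
    intro β hβ
    rw [hGdef] at hβ
    simp only [coeff_add, MvPolynomial.coeff_sum, coeff_monomial] at hβ
    by_cases h1 : α = β
    · exact Or.inl h1.symm
    · rw [if_neg h1, zero_add] at hβ
      obtain ⟨γ, hγ, hne⟩ := Finset.exists_ne_zero_of_sum_ne_zero hβ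
      right
      have : γ = β := by
        by_contra hcon
        rw [if_neg hcon] at hne
        exact hne rfl
      exact this ▸ (Finset.mem_of_mem_erase hγ)
  -- map of the lift is the original on M
  have hGmap : ∀ α ∈ 𝒥.M, MvPolynomial.map φ (G α) = G' α := by
    intro α hα
    rw [hGdef]
    simp only [map_add, map_monomial, map_one]
    rw [map_sum]
    simp only [map_monomial]
    have hrw : ∀ γ ∈ (𝒥.lam α).erase α,
        (monomial γ) (φ (lf (coeff γ (G' α)))) = monomial γ (coeff γ (G' α)) := by
      intro γ _
      rw [hlf]
    rw [Finset.sum_congr rfl hrw]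
    -- now show G' α equals this sum
    have hsupp : (G' α).support ⊆ insert α ((𝒥.lam α).erase α) := by
      intro β hβ
      rcases (hG' α hα).2 β (MvPolynomial.mem_support_iff.mp hβ) with h | h
      · exact h ▸ Finset.mem_insert_self _ _
      · by_cases heq : β = α
        · exact heq ▸ Finset.mem_insert_self _ _
        · exact Finset.mem_insert_of_mem (Finset.mem_erase.mpr ⟨heq, h⟩)
    have hGsum : ∑ β ∈ insert α ((𝒥.lam α).erase α), monomial β (coeff β (G' α)) = G' α := by
      rw [← Finset.sum_subset hsupp
        (fun β _ hβ => by rw [MvPolynomial.notMem_support_iff.mp hβ, map_zero])]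
      exact support_sum_monomial_coeff (G' α)
    conv_rhs => rw [← hGsum]
    rw [Finset.sum_insert (Finset.notMem_erase α _), (hG' α hα).1]
  -- now lift an infinite chain
  rintro ⟨f', hf'⟩
  have hf'' : ∀ i, ∃ α, α ∈ 𝒥.M ∧ ∃ η, η ∈ 𝒥.tau α ∧ coeff (α + η) (f' i) ≠ 0 ∧
      f' (i + 1) = f' i - monomial η (coeff (α + η) (f' i)) * G' α := by
    intro i
    obtain ⟨α, hα, η, hη, hc, he⟩ := hf' i
    exact ⟨α, hα, η, hη, hc, he⟩
  choose av hav ev hev hcv hev2 using hf''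
  obtain ⟨g0, hg0⟩ := MvPolynomial.map_surjective φ hsurj (f' 0)
  set f : ℕ → MvPolynomial (Fin n) A := fun i =>
    Nat.recAux g0 (fun i g => g - monomial (ev i) (coeff (av i + ev i) g) * G (av i)) i
    with hfdef
  have hfsucc : ∀ i, f (i + 1) = f i - monomial (ev i) (coeff (av i + ev i) (f i)) * G (av i) := by
    intro i
    rfl
  have hmap : ∀ i, MvPolynomial.map φ (f i) = f' i := by
    intro i
    induction i with
    | zero => exact hg0
    | succ i ih =>
      rw [hfsucc, map_sub, map_mul, map_monomial, hGmap (av i) (hav i),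
        ← MvPolynomial.coeff_map, ih]
      exact (hev2 i).symm
  refine hnoe G hGmarked ⟨f, fun i => ?_⟩
  refine ⟨av i, hav i, ev i, hev i, ?_, (hfsucc i).symm ▸ rfl⟩
  intro hzero
  apply hcv i
  rw [← hmap i, MvPolynomial.coeff_map, hzero, map_zero]

end Stmt6Aux
namespace Stmt6Aux

open MvPolynomial

variable {n : ℕ} {D : Type} [CommRing D]

/-- The tail used by the edge `f j → f (j+1)`. -/
noncomputable def gam (f : ℕ → Term n × Term n) (j : ℕ) : Term n :=
  Hd (f (j + 1)) - (f j).2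

/-- The coefficient of the edge `f j → f (j+1)`. -/
noncomputable def tco (Fb : Term n → MvPolynomial (Fin n) D)
    (f : ℕ → Term n × Term n) (j : ℕ) : D :=
  coeff (gam f j) (Fb (f j).1)

/-- The tails used by the cycle, per marked term. -/
noncomputable def Kset (f : ℕ → Term n × Term n) (r : ℕ) (α : Term n) :
    Finset (Term n) := by
  classical
  exact ((Finset.range r).filter (fun i => (f i).1 = α)).image (fun i => gam f i)

/-- The pruned marked set associated to a cycle. -/
noncomputable def prG (Fb : Term n → MvPolynomial (Fin n) D)
    (f : ℕ → Term n × Term n) (r : ℕ) : Term n → MvPolynomial (Fin n) D :=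
  fun α => monomial α (1 : D) + ∑ γ' ∈ Kset f r α, monomial γ' (coeff γ' (Fb α))

/-- An edge relation used for the cycles. -/
def CEdge (Fb : Term n → MvPolynomial (Fin n) D) (p q : Term n × Term n) : Prop :=
  p ≠ q ∧ coeff (Hd q) (monomial p.2 (1 : D) * Fb p.1) ≠ 0

lemma cedge_le {Fb : Term n → MvPolynomial (Fin n) D} {p q : Term n × Term n}
    (h : CEdge Fb p q) : p.2 ≤ Hd q := by
  by_contra hle
  have := h.2
  rw [coeff_monomial_mul', if_neg hle] at this
  exact this rfl

lemma cedge_hd_eq {Fb : Term n → MvPolynomial (Fin n) D} {p q : Term n × Term n}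
    (h : CEdge Fb p q) : Hd q = p.2 + (Hd q - p.2) := by
  rw [add_comm, tsub_add_cancel_of_le (cedge_le h)]

lemma cedge_coeff_ne {Fb : Term n → MvPolynomial (Fin n) D} {p q : Term n × Term n}
    (h : CEdge Fb p q) : coeff (Hd q - p.2) (Fb p.1) ≠ 0 := by
  have := h.2
  rw [coeff_monomial_mul', if_pos (cedge_le h), one_mul] at this
  exact this

/-- `α ∉ lam α` for a valid marked term with nonempty multiplicative set. -/
lemma self_not_mem_lam {𝒥 : RedStruct n} {p : Term n × Term n} (hp : PValid 𝒥 p) :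
    p.1 ∉ 𝒥.lam p.1 := by
  intro hmem
  have h0 : (0 : Term n) ∈ 𝒥.tau p.1 := 𝒥.tau_orderIdeal p.1 hp.1 p.2 hp.2 0 zero_le
  exact 𝒥.lam_tail p.1 hp.1 p.1 hmem ⟨0, h0, (add_zero p.1).symm⟩

/-- The tail of an edge between valid pairs lies in `lam` and differs from the source. -/
lemma cedge_gam_mem {𝒥 : RedStruct n} (hdc : 𝒥.hasDisjointCones)
    {Fb : Term n → MvPolynomial (Fin n) D} (hFb : IsMarkedSet 𝒥 Fb)
    {p q : Term n × Term n} (hp : PValid 𝒥 p) (hq : PValid 𝒥 q)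
    (h : CEdge Fb p q) : (Hd q - p.2) ∈ 𝒥.lam p.1 := by
  rcases (hFb p.1 hp.1).2 _ (cedge_coeff_ne h) with heq | hmem
  · exfalso
    apply h.1
    apply hd_inj hdc hp hq
    rw [cedge_hd_eq h, heq]
    unfold Hd
    rw [add_comm]
  · exact hmem

end Stmt6Aux
namespace Stmt6Aux

open MvPolynomial

variable {n : ℕ} {D : Type} [CommRing D]

lemma succ_mod_ne {r i : ℕ} (hr : 2 ≤ r) (hi : i < r) : (i + 1) % r ≠ i := by
  intro h
  rcases Nat.lt_or_ge (i + 1) r with h1 | h1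
  · rw [Nat.mod_eq_of_lt h1] at h
    omega
  · have : i + 1 = r := by omega
    rw [this, Nat.mod_self] at h
    omega

section CleanCase

variable [IsDomain D]

lemma clean_case (𝒥 : RedStruct n) (hdc : 𝒥.hasDisjointCones)
    (noe : ∀ G : Term n → MvPolynomial (Fin n) D,
      IsMarkedSet 𝒥 G → RelNoetherian (Red 𝒥 G))
    (Fb : Term n → MvPolynomial (Fin n) D) (hFb : IsMarkedSet 𝒥 Fb)
    (r : ℕ) (hr : 2 ≤ r) (f : ℕ → Term n × Term n)
    (hper : ∀ j, f (j + r) = f j)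
    (hval : ∀ j, PValid 𝒥 (f j))
    (hedge : ∀ j, CEdge Fb (f j) (f (j + 1)))
    (hinj : ∀ a b, a < r → b < r → f a = f b → a = b)
    (hnd : ¬ ∃ j k, j < r ∧ k < r ∧ f k ≠ f (j + 1) ∧ (f j).2 ≤ Hd (f k) ∧
      (Hd (f k) - (f j).2) ∈ Kset f r ((f j).1)) :
    False := by
  classical
  have hrpos : 0 < r := by omega
  -- periodicity modulo r
  have hperk : ∀ (k j : ℕ), f (j + k * r) = f j := by
    intro k
    induction k with
    | zero => intro j; simp
    | succ k ih =>
      intro j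
      have : j + (k + 1) * r = (j + k * r) + r := by ring
      rw [this, hper, ih]
  have hmod : ∀ j, f (j % r) = f j := by
    intro j
    conv_rhs => rw [← Nat.mod_add_div j r, Nat.mul_comm]
    exact (hperk (j / r) (j % r)).symm
  -- facts about the tails
  have hKmem : ∀ i, i < r → gam f i ∈ Kset f r ((f i).1) := by
    intro i hi
    unfold Kset
    simp only [Finset.mem_image, Finset.mem_filter, Finset.mem_range]
    exact ⟨i, ⟨hi, rfl⟩, rfl⟩
  have hKlam : ∀ α γ', γ' ∈ Kset f r α → γ' ∈ 𝒥.lam α ∧ γ' ≠ α := by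
    intro α γ' hγ'
    unfold Kset at hγ'
    simp only [Finset.mem_image, Finset.mem_filter, Finset.mem_range] at hγ'
    obtain ⟨i, ⟨hi, hα⟩, hg⟩ := hγ'
    have hmem : gam f i ∈ 𝒥.lam ((f i).1) :=
      cedge_gam_mem hdc hFb (hval i) (hval (i + 1)) (hedge i)
    subst hα
    subst hg
    refine ⟨hmem, ?_⟩
    intro hcon
    rw [hcon] at hmem
    exact self_not_mem_lam (hval i) hmem
  -- the pruned marked set
  set G := prG Fb f r with hGdef
  have hGmark : IsMarkedSet 𝒥 G := by
    intro α hα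
    constructor
    · rw [hGdef]
      unfold prG
      rw [coeff_add, coeff_monomial, if_pos rfl, MvPolynomial.coeff_sum]
      have h0 : ∀ γ' ∈ Kset f r α, coeff α (monomial γ' (coeff γ' (Fb α))) = 0 := by
        intro γ' hγ'
        rw [coeff_monomial, if_neg (hKlam α γ' hγ').2]
      rw [Finset.sum_eq_zero h0, add_zero]
    · intro β hβ
      rw [hGdef] at hβ
      unfold prG at hβ
      rw [coeff_add, coeff_monomial, MvPolynomial.coeff_sum] at hβ
      by_cases h1 : α = β
      · exact Or.inl h1.symm
      · rw [if_neg h1, zero_add] at hβ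
        obtain ⟨γ', hγ', hne⟩ := Finset.exists_ne_zero_of_sum_ne_zero hβ
        have : γ' = β := by
          by_contra hcon
          rw [coeff_monomial, if_neg hcon] at hne
          exact hne rfl
        exact Or.inr (this ▸ (hKlam α γ' hγ').1)
  -- the key coefficient computation
  have hcoefG : ∀ i j, i < r → j < r →
      coeff (Hd (f j)) (monomial ((f i).2) (1 : D) * G ((f i).1))
        = (if j = i then 1 else 0) + (if j = (i + 1) % r then tco Fb f i else 0) := by
    intro i j hi hj
    rw [hGdef]
    unfold prG
    rw [mul_add, Finset.mul_sum, coeff_add]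
    congr 1
    · -- head part
      rw [monomial_mul, one_mul, coeff_monomial]
      have hiff : ((f i).2 + (f i).1 = Hd (f j)) ↔ (j = i) := by
        constructor
        · intro h
          apply hinj j i hj hi
          apply hd_inj hdc (hval j) (hval i)
          rw [← h]
          unfold Hd
          rw [add_comm]
        · intro h
          subst h
          unfold Hd
          rw [add_comm]
      by_cases hji : j = i
      · rw [if_pos (hiff.mpr hji), if_pos hji]
      · rw [if_neg (fun hcon => hji (hiff.mp hcon)), if_neg hji]
    · -- tail part
      have hterm : ∀ γ' ∈ Kset f r ((f i).1),
          coeff (Hd (f j)) (monomial ((f i).2) (1 : D) * monomial γ' (coeff γ' (Fb (f i).1)))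
            = if ((f i).2 + γ' = Hd (f j)) then coeff γ' (Fb (f i).1) else 0 := by
        intro γ' _
        rw [monomial_mul, one_mul, coeff_monomial]
      rw [MvPolynomial.coeff_sum, Finset.sum_congr rfl hterm]
      by_cases hj2 : j = (i + 1) % r
      · subst hj2
        rw [if_pos rfl]
        have hone : (f i).2 + gam f i = Hd (f ((i + 1) % r)) := by
          rw [hmod (i + 1)]
          exact (cedge_hd_eq (hedge i)).symm
        refine (Finset.sum_eq_single_of_mem (gam f i) (hKmem i hi) ?_).trans ?_
        · intro γ' hγ' hne
          rw [if_neg]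
          intro hcon
          exact hne (add_left_cancel (hcon.trans hone.symm))
        · rw [if_pos hone]
          rfl
      · rw [if_neg hj2]
        apply Finset.sum_eq_zero
        intro γ' hγ'
        rw [if_neg]
        intro hcon
        -- this would be a dangerous chord
        apply hnd
        refine ⟨i, j, hi, hj, ?_, ?_, ?_⟩
        · -- f j ≠ f (i+1)
          intro hcon2
          apply hj2
          apply hinj j ((i + 1) % r) hj (Nat.mod_lt _ hrpos)
          rw [hmod (i + 1)]
          exact hcon2
        · rw [← hcon]
          exact le_add_right le_rfl
        · rw [← hcon, add_tsub_cancel_left]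
          exact hγ'
  -- the token coefficients
  set ν : ℕ → D := fun m => Nat.recAux 1 (fun m v => -(v * tco Fb f (m % r))) m with hνdef
  have hν0 : ν 0 = 1 := rfl
  have hνs : ∀ m, ν (m + 1) = -(ν m * tco Fb f (m % r)) := fun m => rfl
  have htne : ∀ i, tco Fb f i ≠ 0 := fun i => cedge_coeff_ne (hedge i)
  have hνne : ∀ m, ν m ≠ 0 := by
    intro m
    induction m with
    | zero => rw [hν0]; exact one_ne_zero
    | succ m ih =>
      rw [hνs]
      exact neg_ne_zero.mpr (mul_ne_zero ih (htne _))
  -- the infinite reduction chain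
  set X : ℕ → MvPolynomial (Fin n) D := fun m =>
    Nat.recAux (monomial (Hd (f 0)) (1 : D))
      (fun m g => g - monomial ((f (m % r)).2)
        (coeff ((f (m % r)).1 + (f (m % r)).2) g) * G ((f (m % r)).1)) m with hXdef
  have hXs : ∀ m, X (m + 1) = X m - monomial ((f (m % r)).2)
      (coeff ((f (m % r)).1 + (f (m % r)).2) (X m)) * G ((f (m % r)).1) := fun m => rfl
  have hHd : ∀ j, Hd (f j) = (f j).1 + (f j).2 := fun j => rfl
  -- the invariant
  have hINV : ∀ m, ∀ j, j < r → coeff (Hd (f j)) (X m) = if j = m % r then ν m else 0 := by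
    intro m
    induction m with
    | zero =>
      intro j hj
      have : X 0 = monomial (Hd (f 0)) (1 : D) := rfl
      rw [this, coeff_monomial, Nat.zero_mod, hν0]
      by_cases hj0 : j = 0
      · subst hj0; rw [if_pos rfl, if_pos rfl]
      · have hne2 : ¬ (Hd (f 0) = Hd (f j)) := by
          intro hcon
          exact hj0 (hinj j 0 hj hrpos (hd_inj hdc (hval j) (hval 0) hcon.symm))
        rw [if_neg hne2, if_neg hj0]
    | succ m ih =>
      intro j hj
      have hi : m % r < r := Nat.mod_lt _ hrpos
      have hc0 : coeff ((f (m % r)).1 + (f (m % r)).2) (X m) = ν m := by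
        rw [← hHd, ih (m % r) hi, if_pos rfl]
      rw [hXs, coeff_sub, ih j hj, hc0]
      have hsmul : monomial ((f (m % r)).2) (ν m) * G ((f (m % r)).1)
          = ν m • (monomial ((f (m % r)).2) (1 : D) * G ((f (m % r)).1)) := by
        rw [← smul_mul_assoc, smul_monomial, smul_eq_mul, mul_one]
      rw [hsmul, coeff_smul, hcoefG (m % r) j hi hj, smul_eq_mul]
      have hmod1 : (m + 1) % r = (m % r + 1) % r := by
        rw [Nat.add_mod]
        congr 1
        rw [Nat.mod_eq_of_lt (by omega : (1 : ℕ) < r)]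
      by_cases h1 : j = m % r
      · subst h1
        rw [if_pos rfl, if_pos rfl,
          if_neg (fun hcon => succ_mod_ne hr hi hcon.symm),
          if_neg (fun hcon => succ_mod_ne hr hi ((hcon.trans hmod1).symm))]
        ring
      · rw [if_neg h1, if_neg h1]
        by_cases h2 : j = (m % r + 1) % r
        · rw [if_pos h2, if_pos (h2.trans hmod1.symm), hνs]
          ring
        · rw [if_neg h2, if_neg (fun hcon => h2 (hcon.trans hmod1))]
          ring
  -- the chain contradicts noetherianity
  apply noe G hGmark
  refine ⟨X, fun m => ?_⟩
  have hi : m % r < r := Nat.mod_lt _ hrpos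
  refine ⟨(f (m % r)).1, (hval (m % r)).1, (f (m % r)).2, (hval (m % r)).2, ?_, hXs m⟩
  rw [← hHd, hINV m (m % r) hi, if_pos rfl]
  exact hνne m

end CleanCase

end Stmt6Aux
namespace Stmt6Aux

open MvPolynomial

variable {n : ℕ} {D : Type} [CommRing D]

lemma periodic_mod {X : Type*} {f : ℕ → X} {r : ℕ} (hrpos : 0 < r)
    (hper : ∀ j, f (j + r) = f j) (j : ℕ) : f (j % r) = f j := by
  have hperk : ∀ (k j : ℕ), f (j + k * r) = f j := by
    intro k
    induction k with
    | zero => intro j; simp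
    | succ k ih =>
      intro j
      have : j + (k + 1) * r = (j + k * r) + r := by ring
      rw [this, hper, ih]
  conv_rhs => rw [← Nat.mod_add_div j r, Nat.mul_comm]
  exact (hperk (j / r) (j % r)).symm

lemma kset_lam {𝒥 : RedStruct n} (hdc : 𝒥.hasDisjointCones)
    {Fb : Term n → MvPolynomial (Fin n) D} (hFb : IsMarkedSet 𝒥 Fb)
    {f : ℕ → Term n × Term n} {r : ℕ}
    (hval : ∀ j, PValid 𝒥 (f j)) (hedge : ∀ j, CEdge Fb (f j) (f (j + 1))) :
    ∀ α γ', γ' ∈ Kset f r α → γ' ∈ 𝒥.lam α ∧ γ' ≠ α := by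
  intro α γ' hγ'
  unfold Kset at hγ'
  simp only [Finset.mem_image, Finset.mem_filter, Finset.mem_range] at hγ'
  obtain ⟨i, ⟨hi, hα⟩, hg⟩ := hγ'
  have hmem : gam f i ∈ 𝒥.lam ((f i).1) :=
    cedge_gam_mem hdc hFb (hval i) (hval (i + 1)) (hedge i)
  subst hα
  subst hg
  refine ⟨hmem, ?_⟩
  intro hcon
  rw [hcon] at hmem
  exact self_not_mem_lam (hval i) hmem

section NoCycle

variable [IsDomain D]

/-- THE CYCLE LEMMA: a noetherian RS with disjoint cones admits no cycle in the
tail graph of a marked set over a domain. -/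
lemma no_cycle (𝒥 : RedStruct n) (hdc : 𝒥.hasDisjointCones)
    (noe : ∀ G : Term n → MvPolynomial (Fin n) D,
      IsMarkedSet 𝒥 G → RelNoetherian (Red 𝒥 G))
    (Fb : Term n → MvPolynomial (Fin n) D) (hFb : IsMarkedSet 𝒥 Fb) :
    ∀ r : ℕ, 2 ≤ r → ∀ f : ℕ → Term n × Term n,
      (∀ j, f (j + r) = f j) → (∀ j, PValid 𝒥 (f j)) →
      (∀ j, CEdge Fb (f j) (f (j + 1))) → False := by
  intro r
  induction r using Nat.strong_induction_on with
  | _ r IH =>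
  intro hr f hper hval hedge
  have hrpos : 0 < r := by omega
  have hmod : ∀ j, f (j % r) = f j := periodic_mod hrpos hper
  by_cases hinj : ∀ a b, a < r → b < r → f a = f b → a = b
  · -- injective on the period
    by_cases hdang : ∃ j k, j < r ∧ k < r ∧ f k ≠ f (j + 1) ∧ (f j).2 ≤ Hd (f k) ∧
        (Hd (f k) - (f j).2) ∈ Kset f r ((f j).1)
    · -- dangerous chord: produce a strictly shorter cycle
      obtain ⟨j, k, hj, hk, hne1, hle, hKm⟩ := hdang
      have hkj : f k ≠ f j := by
        intro hcon
        have h2 : Hd (f k) - (f j).2 = (f j).1 := by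
          rw [hcon]
          show (f j).1 + (f j).2 - (f j).2 = (f j).1
          exact add_tsub_cancel_right _ _
        rw [h2] at hKm
        exact (kset_lam hdc hFb hval hedge _ _ hKm).2 rfl
      set s : ℕ := if k ≤ j then j - k else j + r - k with hsdef
      have hfs : f (k + s) = f j := by
        rw [hsdef]
        by_cases hkle : k ≤ j
        · rw [if_pos hkle, Nat.add_sub_cancel' hkle]
        · rw [if_neg hkle]
          have : k + (j + r - k) = j + r := by omega
          rw [this, hper]
      have hs1 : 1 ≤ s := by
        rw [hsdef]
        by_cases hkle : k ≤ j
        · rw [if_pos hkle]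
          rcases Nat.lt_or_ge 0 (j - k) with h | h
          · omega
          · exfalso
            have : j = k := by omega
            exact hkj (by rw [this])
        · rw [if_neg hkle]; omega
      have hs2 : s ≤ r - 2 := by
        have hsr1 : s ≠ r - 1 := by
          intro hcon
          apply hne1
          rw [hsdef] at hcon
          by_cases hkle : k ≤ j
          · rw [if_pos hkle] at hcon
            -- j - k = r - 1 with j < r forces j = r-1, k = 0
            have hj1 : j = r - 1 := by omega
            have hk0 : k = 0 := by omega
            have : f (j + 1) = f 0 := by
              have : j + 1 = 0 + r := by omega
              rw [this, hper]
            rw [hk0, this]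
          · rw [if_neg hkle] at hcon
            have : k = j + 1 := by omega
            rw [this]
        have hsler : s ≤ r - 1 := by
          rw [hsdef]
          by_cases hkle : k ≤ j
          · rw [if_pos hkle]; omega
          · rw [if_neg hkle]; omega
        omega
      set m' : ℕ := s + 1 with hm'def
      have hm'2 : 2 ≤ m' := by omega
      have hm'r : m' < r := by omega
      set h : ℕ → Term n × Term n :=
        fun i => if i % m' = 0 then f j else f (k + i % m' - 1) with hhdef
      have hm'pos : 0 < m' := by omega
      have hhper : ∀ i, h (i + m') = h i := by
        intro i
        simp only [hhdef, Nat.add_mod_right]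
      have hhval : ∀ i, PValid 𝒥 (h i) := by
        intro i
        simp only [hhdef]
        by_cases h0 : i % m' = 0
        · rw [if_pos h0]; exact hval j
        · rw [if_neg h0]; exact hval _
      have hhedge : ∀ i, CEdge Fb (h i) (h (i + 1)) := by
        intro i
        set q := i % m' with hqdef
        have hq : q < m' := Nat.mod_lt _ hm'pos
        have hsucc : (i + 1) % m' = (q + 1) % m' := by
          rw [Nat.add_mod, ← hqdef, Nat.mod_eq_of_lt (by omega : (1:ℕ) < m')]
        by_cases h0 : q = 0
        · -- the chord edge f j → f k
          have h1 : h i = f j := by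
            simp only [hhdef]
            rw [← hqdef, if_pos h0]
          have h2 : h (i + 1) = f k := by
            simp only [hhdef]
            rw [hsucc, h0, Nat.mod_eq_of_lt (by omega : 0 + 1 < m'),
              if_neg (by omega)]
            have : k + (0 + 1) - 1 = k := by omega
            rw [this]
          rw [h1, h2]
          refine ⟨fun hcon => hkj hcon.symm, ?_⟩
          rw [coeff_monomial_mul', if_pos hle, one_mul]
          -- the coefficient is a tail coefficient of the cycle
          unfold Kset at hKm
          simp only [Finset.mem_image, Finset.mem_filter, Finset.mem_range] at hKm
          obtain ⟨i₀, ⟨hi₀, hα₀⟩, hg₀⟩ := hKm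
          rw [← hg₀, ← hα₀]
          exact cedge_coeff_ne (hedge i₀)
        · by_cases hlast : q = m' - 1
          · -- closing edge
            have h1 : h i = f (k + s - 1) := by
              simp only [hhdef]
              rw [← hqdef, if_neg h0, hlast]
              congr 1 <;> omega
            have h2 : h (i + 1) = f (k + s) := by
              simp only [hhdef]
              rw [hsucc, hlast]
              have hms : (m' - 1 + 1) % m' = 0 := by
                have : m' - 1 + 1 = m' := by omega
                rw [this, Nat.mod_self]
              rw [hms, if_pos rfl]
              exact hfs.symm
            rw [h1, h2]
            have hcons : k + s - 1 + 1 = k + s := by omega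
            have := hedge (k + s - 1)
            rwa [hcons] at this
          · -- inner edge
            have hql : q + 1 < m' := by omega
            have h1 : h i = f (k + q - 1) := by
              simp only [hhdef]
              rw [← hqdef, if_neg h0]
            have h2 : h (i + 1) = f (k + q) := by
              simp only [hhdef]
              rw [hsucc, Nat.mod_eq_of_lt hql, if_neg (by omega)]
              congr 1 <;> omega
            rw [h1, h2]
            have hcons : k + q - 1 + 1 = k + q := by omega
            have := hedge (k + q - 1)
            rwa [hcons] at this
      exact IH m' hm'r hm'2 h hhper hhval hhedge
    · exact clean_case 𝒥 hdc noe Fb hFb r hr f hper hval hedge hinj hdang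
  · -- not injective: extract a shorter cycle
    push_neg at hinj
    obtain ⟨a, b, ha, hb, hab, hne⟩ := hinj
    -- wlog a < b
    have hwlog : ∃ a b, a < b ∧ b < r ∧ f a = f b := by
      rcases Nat.lt_or_ge a b with h | h
      · exact ⟨a, b, h, hb, hab⟩
      · have : b < a := by omega
        exact ⟨b, a, this, ha, hab.symm⟩
    obtain ⟨a, b, hab2, hb2, hfab⟩ := hwlog
    set r' : ℕ := b - a with hr'def
    have hr'pos : 0 < r' := by omega
    have hr'2 : 2 ≤ r' := by
      rcases Nat.lt_or_ge r' 2 with h | h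
      · exfalso
        have : r' = 1 := by omega
        have hb1 : b = a + 1 := by omega
        have := (hedge a).1
        rw [← hb1, ← hfab] at this
        exact this rfl
      · exact h
    have hr'r : r' < r := by omega
    set g : ℕ → Term n × Term n := fun i => f (a + i % r') with hgdef
    have hgper : ∀ i, g (i + r') = g i := by
      intro i
      simp only [hgdef, Nat.add_mod_right]
    have hgval : ∀ i, PValid 𝒥 (g i) := fun i => hval _
    have hgedge : ∀ i, CEdge Fb (g i) (g (i + 1)) := by
      intro i
      set q := i % r' with hqdef
      have hq : q < r' := Nat.mod_lt _ hr'pos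
      have hsucc : (i + 1) % r' = (q + 1) % r' := by
        rw [Nat.add_mod, ← hqdef, Nat.mod_eq_of_lt (by omega : (1:ℕ) < r')]
      have h1 : g i = f (a + q) := rfl
      by_cases hl : q + 1 < r'
      · have h2 : g (i + 1) = f (a + q + 1) := by
          simp only [hgdef]
          rw [hsucc, Nat.mod_eq_of_lt hl]
          congr 1 <;> omega
        rw [h1, h2]
        exact hedge (a + q)
      · have hq1 : q + 1 = r' := by omega
        have h2 : g (i + 1) = f (a + q + 1) := by
          simp only [hgdef]
          rw [hsucc, hq1, Nat.mod_self, Nat.add_zero]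
          have hone : a + q + 1 = b := by omega
          rw [hone, ← hfab]
        rw [h1, h2]
        exact hedge (a + q)
    exact IH r' hr'r hr'2 g hgper hgval hgedge

end NoCycle

end Stmt6Aux
namespace Stmt6Aux

open MvPolynomial

variable {n : ℕ} {A : Type} [CommRing A]

lemma key_lemma' (𝒥 : RedStruct n) (hdc : 𝒥.hasDisjointCones)
    (hnoe : ∀ G : Term n → MvPolynomial (Fin n) A,
      IsMarkedSet 𝒥 G → RelNoetherian (Red 𝒥 G))
    (F : Term n → MvPolynomial (Fin n) A) (hF : IsMarkedSet 𝒥 F)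
    {x : MvPolynomial (Fin n) A} (hx : x ∈ tauSpan 𝒥 𝒥.tau F)
    (hxr : IsReducedPoly 𝒥 x) : x = 0 := by
  classical
  obtain ⟨c, hcval, hc⟩ := exists_repr 𝒥 𝒥.tau F hx
  suffices hc0 : c = 0 by rw [hc, hc0, phi_zero]
  set V := c.support with hV
  set Smat : (Term n × Term n) → (Term n × Term n) → A :=
    fun p u => coeff (Hd u) (monomial p.2 (1 : A) * F p.1) with hSdef
  -- the linear equations
  have hEq : ∀ u ∈ V, ∑ p ∈ V, c p * Smat p u = 0 := by
    intro u hu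
    have h1 : coeff (Hd u) x = 0 :=
      coeff_eq_zero_of_reduced hxr (hd_mem_idealJ 𝒥 (by
        obtain ⟨h1, h2⟩ := hcval u hu
        exact ⟨h1, h2⟩))
    rw [hc] at h1
    rw [← h1, Phi, Finsupp.sum, MvPolynomial.coeff_sum]
    apply Finset.sum_congr rfl
    intro p hp
    have : monomial p.2 (c p) * F p.1 = (c p) • (monomial p.2 (1 : A) * F p.1) := by
      rw [← smul_mul_assoc, smul_monomial, smul_eq_mul, mul_one]
    rw [this, coeff_smul, smul_eq_mul, hSdef]
  -- the matrix
  set 𝕄 : Matrix {p // p ∈ V} {p // p ∈ V} A := fun u p => Smat p.1 u.1 with h𝕄def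
  have hmulvec : 𝕄.mulVec (fun p => c p.1) = 0 := by
    funext u
    show (∑ p : {p // p ∈ V}, 𝕄 u p * c p.1) = 0
    rw [h𝕄def]
    have := Finset.sum_coe_sort V (fun p => Smat p u.1 * c p)
    rw [show (∑ p : {p // p ∈ V}, Smat p.1 u.1 * c p.1)
        = ∑ p ∈ V, Smat p u.1 * c p from this]
    rw [← hEq u.1 u.2]
    apply Finset.sum_congr rfl
    intro p _
    ring
  have hdet : (𝕄.det) • (fun p : {p // p ∈ V} => c p.1) = 0 := by
    have h2 := congrArg (Matrix.mulVec 𝕄.adjugate) hmulvec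
    rwa [Matrix.mulVec_mulVec, Matrix.adjugate_mul, Matrix.smul_mulVec,
      Matrix.one_mulVec, Matrix.mulVec_zero] at h2
  -- diagonal is 1
  have hdiag : ∀ u : {p // p ∈ V}, 𝕄 u u = 1 := by
    intro u
    rw [h𝕄def, hSdef]
    show coeff (Hd u.1) (monomial u.1.2 (1:A) * F u.1.1) = 1
    rw [coeff_monomial_mul', if_pos (by
      show u.1.2 ≤ u.1.1 + u.1.2
      exact le_add_self), one_mul]
    have : Hd u.1 - u.1.2 = u.1.1 := by
      show u.1.1 + u.1.2 - u.1.2 = u.1.1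
      exact add_tsub_cancel_right _ _
    rw [this]
    exact (hF u.1.1 (hcval u.1 u.2).1).1
  -- det - 1 is nilpotent
  have hnil : IsNilpotent (𝕄.det - 1) := by
    rw [nilpotent_iff_mem_prime]
    intro J hJ
    by_contra hd
    haveI := hJ
    set φ := Ideal.Quotient.mk J with hφdef
    have hφd : φ (𝕄.det - 1) ≠ 0 := fun hcon => hd (Ideal.Quotient.eq_zero_iff_mem.mp hcon)
    set Fbar : Term n → MvPolynomial (Fin n) (A ⧸ J) := fun α => MvPolynomial.map φ (F α)
      with hFbardef
    have hFbar : IsMarkedSet 𝒥 Fbar := by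
      intro α hα
      constructor
      · rw [hFbardef]
        show coeff α (MvPolynomial.map φ (F α)) = 1
        rw [MvPolynomial.coeff_map, (hF α hα).1, map_one]
      · intro β hβ
        apply (hF α hα).2 β
        intro hcon
        rw [hFbardef] at hβ
        apply hβ
        show coeff β (MvPolynomial.map φ (F α)) = 0
        rw [MvPolynomial.coeff_map, hcon, map_zero]
    -- the mapped matrix has determinant ≠ 1
    set 𝕄b := 𝕄.map φ with h𝕄bdef
    have hdetb : 𝕄b.det ≠ 1 := by
      intro hcon
      apply hφd
      rw [map_sub, map_one, RingHom.map_det]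
      have hmm : φ.mapMatrix 𝕄 = 𝕄b := rfl
      rw [hmm, hcon, sub_self]
    -- Leibniz
    have hleib : 𝕄b.det = ∑ σ : Equiv.Perm {p // p ∈ V},
        Equiv.Perm.sign σ • ∏ i, 𝕄b (σ i) i := Matrix.det_apply 𝕄b
    have hid : (Equiv.Perm.sign (1 : Equiv.Perm {p // p ∈ V})) •
        (∏ i, 𝕄b ((1 : Equiv.Perm {p // p ∈ V}) i) i) = 1 := by
      rw [Equiv.Perm.sign_one, one_smul]
      apply Finset.prod_eq_one
      intro i _
      show φ (𝕄 i i) = 1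
      rw [hdiag i, map_one]
    have hsum : (∑ σ ∈ (Finset.univ.erase (1 : Equiv.Perm {p // p ∈ V})),
        Equiv.Perm.sign σ • ∏ i, 𝕄b (σ i) i) ≠ 0 := by
      intro hcon
      apply hdetb
      rw [hleib, ← Finset.add_sum_erase _ _ (Finset.mem_univ 1), hid, hcon, add_zero]
    obtain ⟨σ, hσmem, hσne⟩ := Finset.exists_ne_zero_of_sum_ne_zero hsum
    have hσ1 : σ ≠ 1 := Finset.ne_of_mem_erase hσmem
    have hprod : (∏ i, 𝕄b (σ i) i) ≠ 0 := by
      intro hcon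
      rw [hcon, smul_zero] at hσne
      exact hσne rfl
    have hfac : ∀ i, 𝕄b (σ i) i ≠ 0 := by
      rw [Finset.prod_ne_zero_iff] at hprod
      intro i
      exact hprod i (Finset.mem_univ i)
    -- a moved point
    have hmoved : ∃ i, σ i ≠ i := by
      by_contra hcon
      push_neg at hcon
      exact hσ1 (Equiv.ext hcon)
    obtain ⟨i₀, hi₀⟩ := hmoved
    -- the cycle
    set K := orderOf σ with hKdef
    have hKpos : 0 < K := orderOf_pos σ
    have hK1 : K ≠ 1 := fun hcon => hσ1 (orderOf_eq_one_iff.mp hcon)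
    have hK2 : 2 ≤ K := by omega
    set f : ℕ → Term n × Term n := fun m => ((σ ^ m) i₀).1 with hfdef
    have hpow : ∀ m, (σ ^ (m + 1)) i₀ = σ ((σ ^ m) i₀) := by
      intro m
      rw [pow_succ', Equiv.Perm.mul_apply]
    have hmove : ∀ m, σ ((σ ^ m) i₀) ≠ (σ ^ m) i₀ := by
      intro m
      induction m with
      | zero => simpa using hi₀
      | succ m ih =>
        intro hcon
        rw [hpow m] at hcon
        exact ih (σ.injective hcon)
    have hper : ∀ m, f (m + K) = f m := by
      intro m
      rw [hfdef]
      show ((σ ^ (m + K)) i₀).1 = ((σ ^ m) i₀).1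
      rw [pow_add, hKdef, pow_orderOf_eq_one, mul_one]
    have hval : ∀ m, PValid 𝒥 (f m) := by
      intro m
      obtain ⟨h1, h2⟩ := hcval ((σ ^ m) i₀).1 ((σ ^ m) i₀).2
      exact ⟨h1, h2⟩
    have hedge : ∀ m, CEdge Fbar (f m) (f (m + 1)) := by
      intro m
      constructor
      · rw [hfdef]
        intro hcon
        apply hmove m
        rw [← hpow m]
        exact Subtype.val_injective hcon.symm
      · have hmapeq : φ (Smat (f m) (f (m + 1)))
            = coeff (Hd (f (m+1))) (monomial ((f m).2) (1 : A ⧸ J) * Fbar ((f m).1)) := by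
          show φ (coeff (Hd (f (m+1))) (monomial ((f m).2) (1:A) * F ((f m).1))) = _
          rw [← MvPolynomial.coeff_map, map_mul, MvPolynomial.map_monomial, map_one φ]
        have hm : 𝕄b ((σ ^ (m + 1)) i₀) ((σ ^ m) i₀) ≠ 0 := by
          rw [hpow m]
          exact hfac ((σ ^ m) i₀)
        have hm2 : φ (Smat (f m) (f (m + 1))) ≠ 0 := hm
        intro hcon
        exact hm2 (hmapeq.trans hcon)
    haveI : IsDomain (A ⧸ J) := Ideal.Quotient.isDomain J
    exact no_cycle 𝒥 hdc (quotient_noe 𝒥 hnoe J) Fbar hFbar K hK2 f hper hval hedge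
  -- conclude
  have hunit : IsUnit 𝕄.det := by
    have := hnil.isUnit_one_add
    have heq : 1 + (𝕄.det - 1) = 𝕄.det := by ring
    rwa [heq] at this
  apply Finsupp.ext
  intro u
  by_cases hu : u ∈ V
  · have := congrFun hdet ⟨u, hu⟩
    simp only [Pi.smul_apply, smul_eq_mul, Pi.zero_apply] at this
    have h0 := (IsUnit.mul_right_eq_zero hunit).mp this
    exact h0
  · exact Finsupp.notMem_support_iff.mp hu

end Stmt6Aux
namespace Stmt6Aux

open MvPolynomial

variable {n : ℕ} {A : Type} [CommRing A]

/-- Under disjoint cones, weak noetherianity gives noetherianity of `Red 𝒥 G`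
for every marked set `G`. -/
lemma noe_of_wn (𝒥 : RedStruct n) (hwn : 𝒥.IsWeaklyNoetherianOver A)
    (hdc : 𝒥.hasDisjointCones) :
    ∀ G : Term n → MvPolynomial (Fin n) A, IsMarkedSet 𝒥 G → RelNoetherian (Red 𝒥 G) := by
  obtain ⟨𝒥', hsub, hnoe⟩ := hwn
  intro G hG
  have h' := hnoe G ((isMarkedSet_iff hsub G).mp hG)
  rintro ⟨f, hf⟩
  exact h' ⟨f, fun i => (red_eq_of_substructure hsub hdc G _ _).mp (hf i)⟩

/-- KEY LEMMA: over a noetherian RS with disjoint cones, a reduced element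
of `⟨τF⟩` is zero. -/
lemma key_lemma (𝒥 : RedStruct n) (hdc : 𝒥.hasDisjointCones)
    (hnoe : ∀ G : Term n → MvPolynomial (Fin n) A,
      IsMarkedSet 𝒥 G → RelNoetherian (Red 𝒥 G))
    (F : Term n → MvPolynomial (Fin n) A) (hF : IsMarkedSet 𝒥 F)
    {x : MvPolynomial (Fin n) A} (hx : x ∈ tauSpan 𝒥 𝒥.tau F)
    (hxr : IsReducedPoly 𝒥 x) : x = 0 :=
  key_lemma' 𝒥 hdc hnoe F hF hx hxr

/-- Forward direction of the iff. -/
lemma redStar_of_sub_mem (𝒥 : RedStruct n) (hdc : 𝒥.hasDisjointCones)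
    (hnoe : ∀ G : Term n → MvPolynomial (Fin n) A,
      IsMarkedSet 𝒥 G → RelNoetherian (Red 𝒥 G))
    (F : Term n → MvPolynomial (Fin n) A) (hF : IsMarkedSet 𝒥 F)
    {l : MvPolynomial (Fin n) A} (hl : IsReducedPoly 𝒥 l) (g : MvPolynomial (Fin n) A)
    (hgl : g - l ∈ tauSpan 𝒥 𝒥.tau F) : RedStar 𝒥 F g l := by
  classical
  have hwf := wf_of_relNoetherian (hnoe F hF)
  revert hgl
  refine hwf.induction
    (C := fun g => g - l ∈ tauSpan 𝒥 𝒥.tau F → RedStar 𝒥 F g l) g ?_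
  intro g ih hmem
  by_cases hstep : ∃ α ∈ 𝒥.M, ∃ η ∈ 𝒥.tau α, coeff (α + η) g ≠ 0
  · obtain ⟨α, hα, η, hη, hc⟩ := hstep
    have hred : Red 𝒥 F g (g - monomial η (coeff (α + η) g) * F α) :=
      ⟨α, hα, η, hη, hc, rfl⟩
    have hmem' : (g - monomial η (coeff (α + η) g) * F α) - l ∈ tauSpan 𝒥 𝒥.tau F := by
      have : (g - monomial η (coeff (α + η) g) * F α) - l
          = (g - l) - monomial η (coeff (α + η) g) * F α := by ring
      rw [this]
      exact Submodule.sub_mem _ hmem (gen_mem 𝒥 𝒥.tau F hα hη _)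
    exact Relation.ReflTransGen.head hred (ih _ hred hmem')
  · have hgred : IsReducedPoly 𝒥 g := reduced_of_no_step 𝒥 F hstep
    have hsubred : IsReducedPoly 𝒥 (g - l) := by
      intro β hβ hJ
      have : coeff β (g - l) = 0 := by
        rw [coeff_sub, coeff_eq_zero_of_reduced hgred hJ,
          coeff_eq_zero_of_reduced hl hJ, sub_zero]
      exact (MvPolynomial.mem_support_iff.mp hβ) this
    have := key_lemma 𝒥 hdc hnoe F hF hmem hsubred
    have hgl : g = l := by
      have := sub_eq_zero.mp this
      exact this
    rw [hgl]
    exact Relation.ReflTransGen.refl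

end Stmt6Aux

/-- over a weakly noetherian RS, `⟨τF⟩ + ⟨N(J)⟩ = P`; if moreover the cones
are disjoint then `⟨τF⟩ ⊕ ⟨N(J)⟩ = P` and for reduced `l`: `g − l ∈ ⟨τF⟩ ↔ g →_* l`. -/
theorem stmt6 {n : ℕ} {A : Type} [CommRing A] (𝒥 : RedStruct n)
    (hwn : 𝒥.IsWeaklyNoetherianOver A)
    (F : Term n → MvPolynomial (Fin n) A) (hF : IsMarkedSet 𝒥 F) :
    (tauSpan 𝒥 𝒥.tau F ⊔ NJSpan 𝒥 A = ⊤) ∧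
    (𝒥.hasDisjointCones →
      IsCompl (tauSpan 𝒥 𝒥.tau F) (NJSpan 𝒥 A) ∧
      ∀ g l : MvPolynomial (Fin n) A, IsReducedPoly 𝒥 l →
        (g - l ∈ tauSpan 𝒥 𝒥.tau F ↔ RedStar 𝒥 F g l)) := by
  open Stmt6Aux in
  refine ⟨sup_eq_top 𝒥 hwn F hF, ?_⟩
  intro hdc
  have hnoe := noe_of_wn 𝒥 hwn hdc
  constructor
  · rw [isCompl_iff]
    constructor
    · rw [Submodule.disjoint_def]
      intro x hxT hxN
      exact key_lemma 𝒥 hdc hnoe F hF hxT (njSpan_reduced hxN)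
    · rw [codisjoint_iff]
      exact sup_eq_top 𝒥 hwn F hF
  · intro g l hl
    exact ⟨redStar_of_sub_mem 𝒥 hdc hnoe F hF hl g, sub_mem_of_redStar 𝒥 F⟩
end

section
/- Let 𝒥 = (M, λ, τ) be a weakly noetherian reduction structure with disjoint cones. Then 𝒥 is noetherian and confluent, i.e. for every marked set F on 𝒥, every polynomial g ∈ P has exactly one reduced form l with g →_* l. -/
open MvPolynomial

variable {n : ℕ}

section Aux1

/-- From noetherianity of a relation, the flipped relation is well-founded. -/
theorem relNoetherian_wf' {X : Type*} {r : X → X → Prop}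
    (h : ¬ ∃ f : ℕ → X, ∀ i, r (f i) (f (i + 1))) :
    WellFounded (fun a b => r b a) := by
  constructor
  intro a
  by_contra ha
  apply h
  have key : ∀ x : X, ¬ Acc (fun a b => r b a) x →
      ∃ y, r x y ∧ ¬ Acc (fun a b => r b a) y := by
    intro x hx
    by_contra hy
    push_neg at hy
    exact hx (Acc.intro x fun y hxy => hy y hxy)
  let step : {x : X // ¬ Acc (fun a b => r b a) x} → {x : X // ¬ Acc (fun a b => r b a) x} :=
    fun t => ⟨(key t.1 t.2).choose, (key t.1 t.2).choose_spec.2⟩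
  let f : ℕ → {x : X // ¬ Acc (fun a b => r b a) x} :=
    fun k => Nat.rec ⟨a, ha⟩ (fun _ t => step t) k
  exact ⟨fun k => (f k).1, fun k => (key (f k).1 (f k).2).choose_spec.1⟩

/-- If `f` is periodic with period `r > 0` then values depend only on index mod `r`. -/
theorem periodic_eq' {X : Type*} {r : ℕ} {f : ℕ → X}
    (hf : ∀ k, f (k + r) = f k) {x y : ℕ} (hxy : x % r = y % r) : f x = f y := by
  have key : ∀ m k, f (k + m * r) = f k := by
    intro m
    induction m with
    | zero => simp
    | succ m ih => intro k; rw [Nat.succ_mul, ← Nat.add_assoc, hf, ih]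
  calc f x = f (x % r + x / r * r) := by rw [Nat.mod_add_div' x r]
    _ = f (x % r) := key _ _
    _ = f (y % r) := by rw [hxy]
    _ = f (y % r + y / r * r) := (key _ _).symm
    _ = f y := by rw [Nat.mod_add_div' y r]

end Aux1
section Aux2

variable {A : Type*} [CommRing A]

/-- A polynomial that admits no reduction step is reduced. -/
theorem exists_reduced_form' (𝒥 : RedStruct n) (F : Term n → MvPolynomial (Fin n) A)
    (hN : RelNoetherian (Red 𝒥 F)) (g : MvPolynomial (Fin n) A) :
    ∃ l, IsReducedPoly 𝒥 l ∧ RedStar 𝒥 F g l := by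
  induction g using (relNoetherian_wf' hN).induction with
  | _ g ih =>
    by_cases hg : IsReducedPoly 𝒥 g
    · exact ⟨g, hg, Relation.ReflTransGen.refl⟩
    · simp only [IsReducedPoly] at hg
      push_neg at hg
      obtain ⟨β, hβs, hβJ⟩ := hg
      obtain ⟨α, hα, η, hη, hβ⟩ := (𝒥.cover β).mp hβJ
      have hc : MvPolynomial.coeff (α + η) g ≠ 0 := by
        rw [← hβ]; exact MvPolynomial.mem_support_iff.mp hβs
      have hred : Red 𝒥 F g (g - MvPolynomial.monomial η (MvPolynomial.coeff (α + η) g) * F α) :=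
        ⟨α, hα, η, hη, hc, rfl⟩
      obtain ⟨l, hl, hstar⟩ := ih _ hred
      exact ⟨l, hl, Relation.ReflTransGen.head hred hstar⟩

/-- Along reduction, differences lie in the span of `τF`. -/
theorem redStar_sub_mem' (𝒥 : RedStruct n) (F : Term n → MvPolynomial (Fin n) A)
    {g h : MvPolynomial (Fin n) A} (hgh : RedStar 𝒥 F g h) :
    g - h ∈ tauSpan 𝒥 𝒥.tau F := by
  induction hgh with
  | refl => simpa using (tauSpan 𝒥 𝒥.tau F).zero_mem
  | @tail b c hs hr ih =>
      obtain ⟨α, hα, η, hη, hc, rfl⟩ := hr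
      have hmem : (MvPolynomial.monomial η (1 : A)) * F α ∈ tauSpan 𝒥 𝒥.tau F :=
        Submodule.subset_span ⟨α, hα, η, hη, rfl⟩
      have h2 : MvPolynomial.monomial η (MvPolynomial.coeff (α + η) b) * F α
          = (MvPolynomial.coeff (α + η) b) • ((MvPolynomial.monomial η (1 : A)) * F α) := by
        rw [← smul_mul_assoc, MvPolynomial.smul_monomial, smul_eq_mul, mul_one]
      have h3 : g - (b - MvPolynomial.monomial η (MvPolynomial.coeff (α + η) b) * F α)
          = (g - b) + MvPolynomial.monomial η (MvPolynomial.coeff (α + η) b) * F α := by ring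
      rw [h3, h2]
      exact (tauSpan 𝒥 𝒥.tau F).add_mem ih
        ((tauSpan 𝒥 𝒥.tau F).smul_mem _ hmem)

end Aux2
section Cycle

variable {A : Type*} [CommRing A]

/-- A cycle of reduction edges: periodic data `a k ∈ M`, `e k ∈ τ_{a k}`,
`g k ∈ λ_{a (k+1)}` with `g k + e (k+1) = a k + e k`. -/
def IsCycleAux (𝒥 : RedStruct n) (r : ℕ) (a e g : ℕ → Term n) : Prop :=
  0 < r ∧ (∀ k, a (k + r) = a k ∧ e (k + r) = e k ∧ g (k + r) = g k) ∧
    ∀ k, a k ∈ 𝒥.M ∧ e k ∈ 𝒥.tau (a k) ∧ g k ∈ 𝒥.lam (a (k + 1)) ∧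
      g k + e (k + 1) = a k + e k

/-- The tail sets used to build the bad marked set from a cycle. -/
noncomputable def TA (r : ℕ) (a g : ℕ → Term n) (α : Term n) : Finset (Term n) := by
  classical
  exact ((Finset.range r).filter fun k => a (k + 1) = α).image g

theorem mem_TA {𝒥 : RedStruct n} {r : ℕ} {a e g : ℕ → Term n}
    (hc : IsCycleAux 𝒥 r a e g) (k : ℕ) : g k ∈ TA r a g (a (k + 1)) := by
  classical
  obtain ⟨hr, hper, hcond⟩ := hc
  have h1 : (k % r + 1) % r = (k + 1) % r := by
    conv_rhs => rw [Nat.add_mod]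
    rw [Nat.add_mod (k % r) 1, Nat.mod_mod_of_dvd _ (dvd_refl r)]
  have hg : g (k % r) = g k := periodic_eq' (fun m => (hper m).2.2) (Nat.mod_mod_of_dvd _ (dvd_refl r))
  have ha : a (k % r + 1) = a (k + 1) := periodic_eq' (fun m => (hper m).1) h1
  simp only [TA, Finset.mem_image]
  exact ⟨k % r, Finset.mem_filter.mpr ⟨Finset.mem_range.mpr (Nat.mod_lt _ hr), ha⟩, hg⟩

theorem TA_spec {𝒥 : RedStruct n} {r : ℕ} {a e g : ℕ → Term n}
    (hc : IsCycleAux 𝒥 r a e g) {α γ : Term n} (hγ : γ ∈ TA r a g α) :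
    ∃ u, u < r ∧ a (u + 1) = α ∧ g u = γ := by
  classical
  simp only [TA, Finset.mem_image, Finset.mem_filter, Finset.mem_range] at hγ
  obtain ⟨u, ⟨hu, hau⟩, hgu⟩ := hγ
  exact ⟨u, hu, hau, hgu⟩

theorem TA_subset_lam {𝒥 : RedStruct n} {r : ℕ} {a e g : ℕ → Term n}
    (hc : IsCycleAux 𝒥 r a e g) {α γ : Term n} (hγ : γ ∈ TA r a g α) :
    γ ∈ 𝒥.lam α := by
  obtain ⟨u, hu, hau, hgu⟩ := TA_spec hc hγ
  subst hgu
  rw [← hau]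
  exact (hc.2.2 u).2.2.1

/-- If `T α` is non-empty then `0 ∈ τ_α` and `α ∉ λ_α`. -/
theorem TA_zero_tau {𝒥 : RedStruct n} {r : ℕ} {a e g : ℕ → Term n}
    (hc : IsCycleAux 𝒥 r a e g) {α γ : Term n} (hγ : γ ∈ TA r a g α) (hα : α ∈ 𝒥.M) :
    (0 : Term n) ∈ 𝒥.tau α ∧ γ ≠ α := by
  obtain ⟨u, hu, hau, hgu⟩ := TA_spec hc hγ
  have he : e (u + 1) ∈ 𝒥.tau α := by rw [← hau]; exact (hc.2.2 (u + 1)).2.1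
  have h0 : (0 : Term n) ∈ 𝒥.tau α := 𝒥.tau_orderIdeal α hα _ he 0 zero_le
  refine ⟨h0, fun hga => ?_⟩
  have hgl : γ ∈ 𝒥.lam α := TA_subset_lam hc hγ
  exact 𝒥.lam_tail α hα γ hgl ⟨0, h0, by rw [hga, add_zero]⟩

end Cycle
section NoJunk

/-- In a cycle of minimal length, a tail term of the reducer at index `t` that lands on
some head `a v + e v` must be the "intended" tail `g (t + (r-1))`. -/
theorem no_junk {𝒥 : RedStruct n} {r : ℕ} {a e g : ℕ → Term n}
    (hc : IsCycleAux 𝒥 r a e g)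
    (hmin : ∀ r' < r, ∀ a' e' g' : ℕ → Term n, ¬ IsCycleAux 𝒥 r' a' e' g')
    {t v : ℕ} {γ' : Term n} (hγ : γ' ∈ TA r a g (a t))
    (heq : γ' + e t = a v + e v) : γ' = g (t + (r - 1)) := by
  obtain ⟨hr, hper, hcond⟩ := hc
  have hpa : ∀ k, a (k + r) = a k := fun k => (hper k).1
  have hpe : ∀ k, e (k + r) = e k := fun k => (hper k).2.1
  obtain ⟨u, hu, hau, hgu⟩ := TA_spec ⟨hr, hper, hcond⟩ hγ
  -- find d < r with (t + d) % r = v % r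
  obtain ⟨d, hdlt, hd⟩ : ∃ d, d < r ∧ (t + d) % r = v % r := by
    have hm : t % r < r := Nat.mod_lt _ hr
    have hdm := Nat.div_add_mod t r
    refine ⟨(v + (r - t % r)) % r, Nat.mod_lt _ hr, ?_⟩
    rw [Nat.add_mod t, Nat.mod_mod_of_dvd _ (dvd_refl r), ← Nat.add_mod]
    have harith : t + (v + (r - t % r)) = v + r + r * (t / r) := by omega
    rw [harith, Nat.add_mul_mod_self_left, Nat.add_mod_right]
  by_cases hd1 : d = r - 1
  · -- the intended tail case
    subst hd1
    have hav : a v = a (t + (r - 1)) := periodic_eq' hpa hd.symm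
    have hev : e v = e (t + (r - 1)) := periodic_eq' hpe hd.symm
    have hrel := (hcond (t + (r - 1))).2.2.2
    have hidx : t + (r - 1) + 1 = t + r := by omega
    rw [hidx, hpe] at hrel
    rw [hav, hev, ← hrel] at heq
    exact add_right_cancel heq
  · -- build a shorter cycle, contradiction
    exfalso
    have hdlt' : d + 1 < r := by omega
    set r' := d + 1 with hr'
    have hr'pos : 0 < r' := Nat.succ_pos d
    have hmod1 : ∀ x : ℕ, (x + 1) % r' = (x % r' + 1) % r' := by
      intro x
      rw [Nat.add_mod x 1, Nat.add_mod (x % r') 1, Nat.mod_mod_of_dvd _ (dvd_refl r')]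
    have hsucc : ∀ k : ℕ, k % r' ≠ d → (k + 1) % r' = k % r' + 1 := by
      intro k hk
      have hklt : k % r' < r' := Nat.mod_lt _ hr'pos
      rw [hmod1 k, Nat.mod_eq_of_lt (by omega)]
    have hsucc' : ∀ k : ℕ, k % r' = d → (k + 1) % r' = 0 := by
      intro k hk
      rw [hmod1 k, hk, hr', Nat.mod_self]
    apply hmin r' hdlt'
      (fun k => a (t + k % r')) (fun k => e (t + k % r'))
      (fun k => if k % r' = d then γ' else g (t + k % r'))
    refine ⟨hr'pos, fun k => ?_, fun k => ?_⟩
    · simp [Nat.add_mod_right]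
    · by_cases hjd : k % r' = d
      · have h3 : (k + 1) % r' = 0 := hsucc' k hjd
        refine ⟨(hcond (t + k % r')).1, (hcond (t + k % r')).2.1, ?_, ?_⟩
        · simp only [if_pos hjd, h3, Nat.add_zero]
          rw [← hau, ← hgu]
          exact (hcond u).2.2.1
        · simp only [if_pos hjd, h3, Nat.add_zero, hjd]
          have hav : a v = a (t + d) := periodic_eq' hpa hd.symm
          have hev : e v = e (t + d) := periodic_eq' hpe hd.symm
          rw [← hav, ← hev]
          exact heq
      · have h3 : (k + 1) % r' = k % r' + 1 := hsucc k hjd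
        refine ⟨(hcond (t + k % r')).1, (hcond (t + k % r')).2.1, ?_, ?_⟩
        · simp only [if_neg hjd, h3]
          rw [← Nat.add_assoc]
          exact (hcond (t + k % r')).2.2.1
        · simp only [if_neg hjd, h3]
          rw [← Nat.add_assoc]
          exact (hcond (t + k % r')).2.2.2

end NoJunk
section NoCycle

open MvPolynomial

variable (A : Type*) [CommRing A]

/-- The marked set built from a cycle. -/
noncomputable def badF (r : ℕ) (a g : ℕ → Term n) : Term n → MvPolynomial (Fin n) A :=
  fun α => monomial α (1 : A) + ∑ γ ∈ TA r a g α, monomial γ (1 : A)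

theorem badF_marked {𝒥 : RedStruct n} {r : ℕ} {a e g : ℕ → Term n}
    (hc : IsCycleAux 𝒥 r a e g) : IsMarkedSet 𝒥 (badF A r a g) := by
  classical
  intro α hα
  constructor
  · rw [badF, coeff_add, coeff_monomial, if_pos rfl, coeff_sum, Finset.sum_eq_zero, add_zero]
    intro γ hγ
    rw [coeff_monomial, if_neg (TA_zero_tau hc hγ hα).2]
  · intro β hβ
    by_contra hcon
    push_neg at hcon
    obtain ⟨hβα, hβl⟩ := hcon
    apply hβ
    rw [badF, coeff_add, coeff_monomial, if_neg (fun h => hβα h.symm), coeff_sum,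
      Finset.sum_eq_zero, add_zero]
    intro γ hγ
    rw [coeff_monomial, if_neg]
    intro h
    exact hβl (h ▸ TA_subset_lam hc hγ)

/-- The infinite reduction sequence built from a cycle. -/
noncomputable def badG (r : ℕ) (a e g : ℕ → Term n) : ℕ → MvPolynomial (Fin n) A
  | 0 => monomial (a 0 + e 0) (1 : A)
  | (s + 1) => badG r a e g s -
      monomial (e (s * (r - 1)))
        (coeff (a (s * (r - 1)) + e (s * (r - 1))) (badG r a e g s)) *
        badF A r a g (a (s * (r - 1)))

theorem no_cycle (𝒥 : RedStruct n) [Nontrivial A] (hnoeth : 𝒥.IsNoetherianOver A) :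
    ¬ ∃ (r : ℕ) (a e g : ℕ → Term n), IsCycleAux 𝒥 r a e g := by
  classical
  intro hex
  have hmin : ∀ r' < Nat.find hex, ∀ a' e' g' : ℕ → Term n, ¬ IsCycleAux 𝒥 r' a' e' g' := by
    intro r' hr' a' e' g' hcy
    exact Nat.find_min hex hr' ⟨a', e', g', hcy⟩
  obtain ⟨a, e, g, hc⟩ := Nat.find_spec hex
  set r := Nat.find hex with hrdef
  have hr : 0 < r := hc.1
  have hpa : ∀ k, a (k + r) = a k := fun k => (hc.2.1 k).1
  have hpe : ∀ k, e (k + r) = e k := fun k => (hc.2.1 k).2.1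
  have hcond := hc.2.2
  -- the invariant of the reduction sequence
  have hinv : ∀ s : ℕ, ∃ E : MvPolynomial (Fin n) A,
      badG A r a e g s
        = ((-1 : A) ^ s) • monomial (a (s * (r - 1)) + e (s * (r - 1))) 1 + E ∧
      ∀ v : ℕ, coeff (a v + e v) E = 0 := by
    intro s
    induction s with
    | zero =>
      refine ⟨0, ?_, fun v => by simp⟩
      simp [badG]
    | succ s ih =>
      obtain ⟨E, hG, hE⟩ := ih
      set k := s * (r - 1) with hk
      have hk1 : (s + 1) * (r - 1) = k + (r - 1) := by rw [hk]; ring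
      have hcoe : coeff (a k + e k) (badG A r a e g s) = (-1 : A) ^ s := by
        rw [hG, coeff_add, coeff_smul, coeff_monomial, if_pos rfl, hE k, smul_eq_mul,
          mul_one, add_zero]
      -- the intended tail
      have hidx : k + (r - 1) + 1 = k + r := by omega
      have hmem : g (k + (r - 1)) ∈ TA r a g (a k) := by
        have h := mem_TA hc (k + (r - 1))
        rwa [hidx, hpa k] at h
      have hstar : g (k + (r - 1)) + e k = a (k + (r - 1)) + e (k + (r - 1)) := by
        have h := (hcond (k + (r - 1))).2.2.2
        rwa [hidx, hpe k] at h
      -- expansion of the reducer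
      have hmul : monomial (e k) (1 : A) * badF A r a g (a k)
          = monomial (a k + e k) 1 +
            (monomial (g (k + (r - 1)) + e k) 1 +
              ∑ γ ∈ (TA r a g (a k)).erase (g (k + (r - 1))), monomial (γ + e k) (1 : A)) := by
        rw [badF, mul_add, Finset.mul_sum]
        simp only [monomial_mul, one_mul]
        rw [add_comm (e k) (a k)]
        congr 1
        rw [← Finset.add_sum_erase _ _ hmem]
        congr 1
        · rw [add_comm]
        · refine Finset.sum_congr rfl fun γ hγ => by rw [add_comm]
      refine ⟨E - ((-1 : A) ^ s) •
          ∑ γ ∈ (TA r a g (a k)).erase (g (k + (r - 1))), monomial (γ + e k) (1 : A),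
        ?_, ?_⟩
      · show badG A r a e g s - monomial (e k) (coeff (a k + e k) (badG A r a e g s)) *
            badF A r a g (a k) = _
        rw [hcoe]
        have hmon : monomial (e k) ((-1 : A) ^ s) = ((-1 : A) ^ s) • monomial (e k) 1 := by
          rw [smul_monomial, smul_eq_mul, mul_one]
        rw [hmon, smul_mul_assoc, hmul, hG, hk1, hstar]
        simp only [smul_eq_C_mul, pow_succ, map_mul, map_neg, map_one, map_pow]
        ring
      · intro v
        rw [coeff_sub, hE v, coeff_smul, coeff_sum, Finset.sum_eq_zero, smul_zero,
          sub_zero]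
        intro γ hγ
        rw [coeff_monomial, if_neg]
        intro hcol
        have hγT : γ ∈ TA r a g (a k) := Finset.mem_of_mem_erase hγ
        have := no_junk hc hmin hγT hcol
        exact (Finset.ne_of_mem_erase hγ) this
  -- each step is a genuine reduction step
  have hred : ∀ s, Red 𝒥 (badF A r a g) (badG A r a e g s) (badG A r a e g (s + 1)) := by
    intro s
    obtain ⟨E, hG, hE⟩ := hinv s
    have hcoe : coeff (a (s * (r - 1)) + e (s * (r - 1))) (badG A r a e g s) = (-1 : A) ^ s := by
      rw [hG, coeff_add, coeff_smul, coeff_monomial, if_pos rfl, hE (s * (r - 1)),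
        smul_eq_mul, mul_one, add_zero]
    refine ⟨a (s * (r - 1)), (hcond (s * (r - 1))).1, e (s * (r - 1)),
      (hcond (s * (r - 1))).2.1, ?_, rfl⟩
    rw [hcoe]
    exact ((isUnit_one.neg).pow s).ne_zero
  exact hnoeth (badF A r a g) (badF_marked A hc) ⟨badG A r a e g, hred⟩

end NoCycle
section SpanZero

open MvPolynomial

variable {A : Type*} [CommRing A]

theorem reduced_span_eq_zero (𝒥 : RedStruct n) (hd : 𝒥.hasDisjointCones)
    (hnoeth : 𝒥.IsNoetherianOver A)
    {F : Term n → MvPolynomial (Fin n) A} (hF : IsMarkedSet 𝒥 F)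
    {p : MvPolynomial (Fin n) A} (hp : p ∈ tauSpan 𝒥 𝒥.tau F)
    (hpred : IsReducedPoly 𝒥 p) : p = 0 := by
  classical
  by_contra hp0
  obtain ⟨β0, hβ0⟩ : ∃ β, coeff β p ≠ 0 := by
    by_contra hall
    push_neg at hall
    exact hp0 (MvPolynomial.eq_zero_iff.mpr hall)
  haveI : Nontrivial A := nontrivial_of_ne _ _ hβ0
  rw [tauSpan] at hp
  obtain ⟨c, hcsupp, hcsum⟩ := Submodule.mem_span_set.mp hp
  have hpair : ∀ v : MvPolynomial (Fin n) A, v ∈ c.support →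
      ∃ α η : Term n, α ∈ 𝒥.M ∧ η ∈ 𝒥.tau α ∧ v = monomial η (1 : A) * F α := by
    intro v hv
    obtain ⟨α, hα, η, hη, hveq⟩ := hcsupp hv
    exact ⟨α, η, hα, hη, hveq⟩
  choose al et hal het hveq using fun (v : {x // x ∈ c.support}) => hpair v.1 v.2
  -- the coefficient of p at each head vanishes
  have hcoeff0 : ∀ v : {x // x ∈ c.support}, coeff (al v + et v) p = 0 := by
    intro v
    by_contra h
    exact hpred _ (MvPolynomial.mem_support_iff.mpr h) ⟨al v, hal v, et v, rfl⟩
  -- expansion of the coefficient as a sum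
  have hexp : ∀ β : Term n, coeff β p = ∑ w ∈ c.support.attach, c w.1 * coeff β w.1 := by
    intro β
    rw [← hcsum, Finsupp.sum]
    rw [MvPolynomial.coeff_sum]
    rw [← Finset.sum_attach c.support (fun w => coeff β (c w • w))]
    refine Finset.sum_congr rfl fun w _ => ?_
    rw [MvPolynomial.coeff_smul, smul_eq_mul]
  -- diagonal coefficient is 1
  have hdiag : ∀ v : {x // x ∈ c.support}, coeff (al v + et v) v.1 = 1 := by
    intro v
    rw [hveq v, MvPolynomial.coeff_monomial_mul', if_pos le_add_self, add_tsub_cancel_right,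
      (hF (al v) (hal v)).1, mul_one]
  -- heads determine the generator (disjoint cones)
  have hhead : ∀ v w : {x // x ∈ c.support}, al v + et v = al w + et w → v = w := by
    intro v w hvw
    have haeq : al v = al w := by
      by_contra hne
      have h := hd (al v) (hal v) (al w) (hal w) hne
      have hmem : al v + et v ∈ 𝒥.cone (al v) ∩ 𝒥.cone (al w) :=
        ⟨⟨et v, het v, rfl⟩, ⟨et w, het w, hvw⟩⟩
      rw [h] at hmem
      exact hmem
    have heeq : et v = et w := by
      apply add_left_cancel (a := al v)
      rw [hvw, haeq]
    apply Subtype.ext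
    rw [hveq v, hveq w, haeq, heeq]
  -- the step function
  have hstep : ∀ v : {x // x ∈ c.support}, ∃ w : {x // x ∈ c.support}, ∃ γ : Term n,
      γ ∈ 𝒥.lam (al w) ∧ al v + et v = γ + et w := by
    intro v
    have h1 : ∑ w ∈ c.support.attach, c w.1 * coeff (al v + et v) w.1 = 0 := by
      rw [← hexp, hcoeff0 v]
    have hvmem : v ∈ c.support.attach := Finset.mem_attach _ v
    rw [← Finset.add_sum_erase _ _ hvmem, hdiag v, mul_one] at h1
    have hcv : c v.1 ≠ 0 := Finsupp.mem_support_iff.mp v.2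
    have h2 : ∑ w ∈ c.support.attach.erase v, c w.1 * coeff (al v + et v) w.1 ≠ 0 := by
      intro h
      rw [h, add_zero] at h1
      exact hcv h1
    obtain ⟨w, hw, hwne⟩ := Finset.exists_ne_zero_of_sum_ne_zero h2
    have hwv : w ≠ v := Finset.ne_of_mem_erase hw
    have hcw : coeff (al v + et v) w.1 ≠ 0 := right_ne_zero_of_mul hwne
    rw [hveq w, MvPolynomial.coeff_monomial_mul'] at hcw
    by_cases hle : et w ≤ al v + et v
    · rw [if_pos hle] at hcw
      have hγ : coeff (al v + et v - et w) (F (al w)) ≠ 0 := by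
        intro h
        rw [h, mul_zero] at hcw
        exact hcw rfl
      have hcases := (hF (al w) (hal w)).2 _ hγ
      have hsum : (al v + et v - et w) + et w = al v + et v := tsub_add_cancel_of_le hle
      rcases hcases with hh | hh
      · exfalso
        apply hwv
        apply hhead w v
        rw [← hsum, hh, add_comm]
      · exact ⟨w, _, hh, hsum.symm⟩
    · rw [if_neg hle] at hcw
      exact absurd rfl hcw
  choose σf γw hγw hbw using hstep
  -- nonemptiness
  obtain ⟨v0, hv0⟩ : ∃ v0 : MvPolynomial (Fin n) A, v0 ∈ c.support := by
    by_contra hno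
    push_neg at hno
    have : c = 0 := Finsupp.support_eq_empty.mp (Finset.eq_empty_of_forall_notMem hno)
    rw [this] at hcsum
    simp only [Finsupp.sum_zero_index] at hcsum
    exact hp0 hcsum.symm
  set seq : ℕ → {x // x ∈ c.support} := fun m => σf^[m] ⟨v0, hv0⟩ with hseqdef
  have hseqsucc : ∀ m, seq (m + 1) = σf (seq m) := fun m =>
    Function.iterate_succ_apply' σf m _
  -- pigeonhole
  have key : ∀ i j : ℕ, i < j → seq i = seq j → False := by
    intro i j hij hseq
    set r := j - i with hrd
    have hr : 0 < r := by omega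
    have hper : ∀ m, seq (i + m + r) = seq (i + m) := by
      intro m
      induction m with
      | zero =>
        have h1 : i + 0 + r = j := by omega
        rw [h1]
        simpa using hseq.symm
      | succ m ih =>
        have e1 : i + (m + 1) + r = (i + m + r) + 1 := by omega
        have e2 : i + (m + 1) = (i + m) + 1 := by omega
        rw [e1, e2, hseqsucc, hseqsucc, ih]
    have hcyc : IsCycleAux 𝒥 r (fun k => al (seq (i + k))) (fun k => et (seq (i + k)))
        (fun k => γw (seq (i + k))) := by
      refine ⟨hr, fun k => ?_, fun k => ?_⟩
      · have h1 : i + (k + r) = i + k + r := by omega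
        beta_reduce
        rw [h1, hper k]
        exact ⟨rfl, rfl, rfl⟩
      · have h2 : i + (k + 1) = (i + k) + 1 := by omega
        refine ⟨hal _, het _, ?_, ?_⟩
        · beta_reduce
          rw [h2, hseqsucc]
          exact hγw (seq (i + k))
        · beta_reduce
          rw [h2, hseqsucc]
          exact (hbw (seq (i + k))).symm
    exact no_cycle A 𝒥 hnoeth ⟨r, _, _, _, hcyc⟩
  obtain ⟨i, j, hij, hseq⟩ := Finite.exists_ne_map_eq_of_infinite seq
  rcases lt_or_gt_of_ne hij with h | h
  · exact key i j h hseq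
  · exact key j i h hseq.symm

end SpanZero
/-- a weakly noetherian RS with disjoint cones is noetherian and confluent:
for every marked set `F`, every polynomial has exactly one reduced form. -/
theorem stmt7 {n : ℕ} {A : Type} [CommRing A] (𝒥 : RedStruct n)
    (hwn : 𝒥.IsWeaklyNoetherianOver A) (hd : 𝒥.hasDisjointCones) :
    𝒥.IsNoetherianOver A ∧
      ∀ F : Term n → MvPolynomial (Fin n) A, IsMarkedSet 𝒥 F →
        ∀ g : MvPolynomial (Fin n) A,
          ∃! l : MvPolynomial (Fin n) A, IsReducedPoly 𝒥 l ∧ RedStar 𝒥 F g l := by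
  classical
  obtain ⟨𝒥', ⟨hM, hlam, hsub⟩, hnoe'⟩ := hwn
  -- with disjoint cones, the substructure has the same multiplicative sets
  have htaueq : ∀ α ∈ 𝒥.M, 𝒥'.tau α = 𝒥.tau α := by
    intro α hα
    refine Set.Subset.antisymm (hsub α hα) ?_
    intro η hη
    have hβJ' : ∃ α' ∈ 𝒥'.M, ∃ η', α + η = α' + η' := ⟨α, by rw [hM]; exact hα, η, rfl⟩
    obtain ⟨α', hα', η', hη', heq⟩ := (𝒥'.cover (α + η)).mp hβJ'
    have hα'M : α' ∈ 𝒥.M := by rw [← hM]; exact hα'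
    have hαeq : α = α' := by
      by_contra hne
      have h := hd α hα α' hα'M hne
      have hmem : α + η ∈ 𝒥.cone α ∩ 𝒥.cone α' :=
        ⟨⟨η, hη, rfl⟩, ⟨η', hsub α' hα'M hη', heq⟩⟩
      rw [h] at hmem
      exact hmem
    subst hαeq
    have hee : η = η' := add_left_cancel heq
    rw [hee]
    exact hη'
  -- the reduction relations of `𝒥` and `𝒥'` coincide
  have hrediff : ∀ F : Term n → MvPolynomial (Fin n) A,
      ∀ g h, Red 𝒥 F g h ↔ Red 𝒥' F g h := by
    intro F g h
    constructor
    · rintro ⟨α, hα, η, hη, hcne, rfl⟩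
      exact ⟨α, by rw [hM]; exact hα, η, by rw [htaueq α hα]; exact hη, hcne, rfl⟩
    · rintro ⟨α, hα, η, hη, hcne, rfl⟩
      have hαM : α ∈ 𝒥.M := by rw [← hM]; exact hα
      exact ⟨α, hαM, η, by rw [← htaueq α hαM]; exact hη, hcne, rfl⟩
  have hnoeth : 𝒥.IsNoetherianOver A := by
    intro F hF
    have hF' : IsMarkedSet 𝒥' F := by
      intro α hα
      have hαM : α ∈ 𝒥.M := by rw [← hM]; exact hα
      obtain ⟨h1, h2⟩ := hF α hαM
      exact ⟨h1, fun β hβ => by rw [hlam]; exact h2 β hβ⟩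
    rintro ⟨f, hf⟩
    exact hnoe' F hF' ⟨f, fun i => (hrediff F _ _).mp (hf i)⟩
  refine ⟨hnoeth, fun F hF g => ?_⟩
  obtain ⟨l, hlred, hlstar⟩ := exists_reduced_form' 𝒥 F (hnoeth F hF) g
  refine ⟨l, ⟨hlred, hlstar⟩, ?_⟩
  rintro l' ⟨hl'red, hl'star⟩
  have hmem : l' - l ∈ tauSpan 𝒥 𝒥.tau F := by
    have h1 := redStar_sub_mem' 𝒥 F hlstar
    have h2 := redStar_sub_mem' 𝒥 F hl'star
    have hsplit : l' - l = (g - l) - (g - l') := by ring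
    rw [hsplit]
    exact Submodule.sub_mem _ h1 h2
  have hredp : IsReducedPoly 𝒥 (l' - l) := by
    intro β hβ hβJ
    have hc : MvPolynomial.coeff β (l' - l) ≠ 0 := MvPolynomial.mem_support_iff.mp hβ
    rw [MvPolynomial.coeff_sub] at hc
    by_cases h1 : MvPolynomial.coeff β l' = 0
    · have h2 : MvPolynomial.coeff β l ≠ 0 := by
        intro h
        rw [h1, h, sub_zero] at hc
        exact hc rfl
      exact hlred β (MvPolynomial.mem_support_iff.mpr h2) hβJ
    · exact hl'red β (MvPolynomial.mem_support_iff.mpr h1) hβJ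
  have hz := reduced_span_eq_zero 𝒥 hd hnoeth hF hmem hredp
  exact sub_eq_zero.mp hz
end

section
/- If 𝒥 = (M, λ, τ) is a reduction structure with maximal cones (τ_α = 𝒯 for all x^α ∈ M), then there exists a substructure 𝒥' = (M, λ, τ') of 𝒥 (so each τ'_α ⊆ τ_α is an order ideal and ⋃_{x^α ∈ M} x^α τ'_α = J) which has disjoint cones. -/
open MvPolynomial

variable {n : ℕ}

section Aux

variable {n : ℕ}

open Classical in
/-- Pick the `WellOrderingRel`-least element of `M` dividing `β`, if one exists. -/
noncomputable def pick (𝒥 : RedStruct n) (β : Term n) : Term n :=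
  if h : ({α | α ∈ 𝒥.M ∧ α ≤ β} : Set (Term n)).Nonempty then
    (IsWellFounded.wf (r := (WellOrderingRel : Term n → Term n → Prop))).min
      {α | α ∈ 𝒥.M ∧ α ≤ β} h
  else 0

open Classical in
lemma pick_spec (𝒥 : RedStruct n) {β : Term n}
    (h : ({α | α ∈ 𝒥.M ∧ α ≤ β} : Set (Term n)).Nonempty) :
    (pick 𝒥 β ∈ 𝒥.M ∧ pick 𝒥 β ≤ β) ∧
      ∀ α, α ∈ 𝒥.M → α ≤ β → ¬ WellOrderingRel α (pick 𝒥 β) := by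
  rw [pick, dif_pos h]
  exact ⟨(IsWellFounded.wf).min_mem _ h,
    fun α hM hle hr => (IsWellFounded.wf).not_lt_min {α | α ∈ 𝒥.M ∧ α ≤ β} (x := α) ⟨hM, hle⟩ hr⟩

lemma pick_eq (𝒥 : RedStruct n) {β α : Term n} (hM : α ∈ 𝒥.M) (hle : α ≤ β)
    (hmin : ∀ α', α' ∈ 𝒥.M → α' ≤ β → ¬ WellOrderingRel α' α) :
    pick 𝒥 β = α := by
  have h : ({α | α ∈ 𝒥.M ∧ α ≤ β} : Set (Term n)).Nonempty := ⟨α, hM, hle⟩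
  obtain ⟨⟨hM', hle'⟩, hmin'⟩ := pick_spec 𝒥 h
  rcases trichotomous_of (WellOrderingRel : Term n → Term n → Prop) (pick 𝒥 β) α with
    h1 | h1 | h1
  · exact absurd h1 (hmin _ hM' hle')
  · exact h1
  · exact absurd h1 (hmin' _ hM hle)

end Aux

/-- a reduction structure with maximal cones has a substructure with
disjoint cones. -/
theorem stmt8 {n : ℕ} (𝒥 : RedStruct n) (hmax : 𝒥.hasMaximalCones) :
    ∃ 𝒥' : RedStruct n, RedStruct.IsSubstructure 𝒥' 𝒥 ∧ 𝒥'.hasDisjointCones := by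
  classical
  refine ⟨{ M := 𝒥.M
            tau := fun α => {η | pick 𝒥 (α + η) = α}
            lam := 𝒥.lam
            tau_orderIdeal := ?_
            cover := ?_
            lam_tail := ?_ }, ⟨rfl, rfl, ?_⟩, ?_⟩
  · -- order ideal
    intro α hα η hη η' hη'
    have hle : α + η' ≤ α + η := add_le_add_right hη' α
    refine pick_eq 𝒥 hα (self_le_add_right α η') ?_
    intro α' hM' hle' hr
    -- α' divides α + η as well
    have hle'' : α' ≤ α + η := hle'.trans hle
    have h := (pick_spec 𝒥 ⟨α, hα, self_le_add_right α η⟩).2 α' hM' hle''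
    rw [show pick 𝒥 (α + η) = α from hη] at h
    exact h hr
  · -- cover
    intro β
    constructor
    · rintro ⟨α, hα, η, rfl⟩
      have hne : ({γ | γ ∈ 𝒥.M ∧ γ ≤ α + η} : Set (Term n)).Nonempty :=
        ⟨α, hα, self_le_add_right α η⟩
      obtain ⟨⟨hM, hle⟩, -⟩ := pick_spec 𝒥 hne
      refine ⟨pick 𝒥 (α + η), hM, (α + η) - pick 𝒥 (α + η), ?_, ?_⟩
      · show pick 𝒥 (pick 𝒥 (α + η) + ((α + η) - pick 𝒥 (α + η))) = _
        rw [add_tsub_cancel_of_le hle]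
      · rw [add_tsub_cancel_of_le hle]
    · rintro ⟨α, hα, η, -, rfl⟩
      exact ⟨α, hα, η, rfl⟩
  · -- lam_tail
    intro α hα γ hγ ⟨η, hη, hγη⟩
    exact 𝒥.lam_tail α hα γ hγ ⟨η, by rw [hmax α hα]; trivial, hγη⟩
  · -- substructure: tau inclusion
    intro α hα
    rw [hmax α hα]
    exact Set.subset_univ _
  · -- disjoint cones
    intro α hα α' hα' hne
    ext β
    simp only [Set.mem_inter_iff, Set.mem_empty_iff_false, iff_false]
    rintro ⟨⟨η, hη, rfl⟩, ⟨η', hη', heq⟩⟩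
    apply hne
    have h1 : pick 𝒥 (α + η) = α := hη
    have h2 : pick 𝒥 (α' + η') = α' := hη'
    rw [← heq] at h2
    rw [← h1, ← h2]
end

section
/- Let 𝒥 = (M, λ, τ) be a weakly noetherian reduction structure. Then there is a family of sets of terms τ̄ = {τ̄_α}_{x^α ∈ M} with τ̄_α ⊆ τ_α such that: (a) for all distinct x^α, x^{α'} ∈ M, x^α τ̄_α ∩ x^{α'} τ̄_{α'} = ∅; (b) ⋃_{x^α ∈ M} x^α τ̄_α = J; (c) for every marked set F on 𝒥, the reduction process →_{τ̄F} which uses only the polynomials τ̄F := {x^η f_α : x^α ∈ M, x^η ∈ τ̄_α} is noetherian (every sequence of such reduction steps terminates). -/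
open MvPolynomial

variable {n : ℕ}

/-- for a weakly noetherian RS there is a family `τ̄` of subsets of `τ`
with pairwise disjoint translated cones covering `J` such that, for every marked set `F`,
the reduction using only `τ̄F` is noetherian. -/
theorem stmt9 {n : ℕ} {A : Type} [CommRing A] (𝒥 : RedStruct n)
    (hwn : 𝒥.IsWeaklyNoetherianOver A) :
    ∃ τb : Term n → Set (Term n),
      (∀ α ∈ 𝒥.M, τb α ⊆ 𝒥.tau α) ∧
      (∀ α ∈ 𝒥.M, ∀ α' ∈ 𝒥.M, α ≠ α' →
        {β : Term n | ∃ η ∈ τb α, β = α + η} ∩ {β : Term n | ∃ η ∈ τb α', β = α' + η} = ∅) ∧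
      (⋃ α ∈ 𝒥.M, {β : Term n | ∃ η ∈ τb α, β = α + η}) = 𝒥.idealJ ∧
      ∀ F : Term n → MvPolynomial (Fin n) A, IsMarkedSet 𝒥 F →
        RelNoetherian (RedStep 𝒥 τb F) := by
  classical
  obtain ⟨𝒥', ⟨hM, hlam, htau⟩, hnoe⟩ := hwn
  set P : Term n → Term n × Term n → Prop := fun β p =>
    p.1 ∈ 𝒥'.M ∧ p.2 ∈ 𝒥'.tau p.1 ∧ β = p.1 + p.2 with hP
  set f : Term n → Term n × Term n := fun β =>
    if h : ∃ p, P β p then h.choose else (0, 0) with hfdef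
  have hf : ∀ β, (∃ p, P β p) → P β (f β) := by
    intro β h
    have he : f β = h.choose := dif_pos h
    rw [he]; exact h.choose_spec
  refine ⟨fun α => {η | η ∈ 𝒥'.tau α ∧ f (α + η) = (α, η)}, ?_, ?_, ?_, ?_⟩
  · intro α hα η hη
    exact htau α hα hη.1
  · intro α hα α' hα' hne
    ext β
    simp only [Set.mem_inter_iff, Set.mem_setOf_eq, Set.mem_empty_iff_false, iff_false]
    rintro ⟨⟨η, ⟨_, hfη⟩, rfl⟩, ⟨η', ⟨_, hfη'⟩, hβ'⟩⟩
    rw [hβ'] at hfη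
    rw [hfη'] at hfη
    exact hne (congrArg Prod.fst hfη).symm
  · ext β
    simp only [Set.mem_iUnion, Set.mem_setOf_eq]
    constructor
    · rintro ⟨α, hα, η, ⟨hη, _⟩, rfl⟩
      exact ⟨α, hα, η, rfl⟩
    · intro hβ
      have hβ' : ∃ α ∈ 𝒥'.M, ∃ η ∈ 𝒥'.tau α, β = α + η := by
        rw [← 𝒥'.cover]
        obtain ⟨α, hα, η, hβe⟩ := hβ
        exact ⟨α, hM ▸ hα, η, hβe⟩
      have hPf : P β (f β) := by
        apply hf
        obtain ⟨α, hα, η, hη, hβe⟩ := hβ'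
        exact ⟨(α, η), hα, hη, hβe⟩
      obtain ⟨h1, h2, h3⟩ := hPf
      refine ⟨(f β).1, hM ▸ h1, (f β).2, ⟨h2, ?_⟩, h3⟩
      rw [← h3]
  · intro F hF
    have hF' : IsMarkedSet 𝒥' F := by
      unfold IsMarkedSet
      rw [hM, hlam]
      exact hF
    intro ⟨g, hg⟩
    refine hnoe F hF' ⟨g, fun i => ?_⟩
    obtain ⟨α, hα, η, hη, hc, he⟩ := hg i
    exact ⟨α, hM ▸ hα, η, hη.1, hc, he⟩
end

section
/- Let F be a marked set over a weakly noetherian reduction structure 𝒥. If F is a marked basis, then →_{F𝒥} is confluent. Conversely, if →_{F𝒥} is confluent, then the following are equivalent: (a) F is a marked basis; (b) (F) = ⟨τF⟩; (c) for each x^α ∈ M and each x^γ ∈ 𝒯 \ τ_α, every reduced l with x^γ f_α →_* l equals 0. -/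
open MvPolynomial

variable {n : ℕ}

section Auxiliary

variable {A : Type*} [CommRing A]

/-- Each reduction step changes `g` by an element of `⟨τF⟩`; hence so does `→*`. -/
lemma redstar_sub_mem (𝒥 : RedStruct n) (F : Term n → MvPolynomial (Fin n) A)
    {g l : MvPolynomial (Fin n) A} (h : RedStar 𝒥 F g l) :
    g - l ∈ tauSpan 𝒥 𝒥.tau F := by
  induction h with
  | refl => simp only [sub_self]; exact (tauSpan 𝒥 𝒥.tau F).zero_mem
  | @tail b c _ hstep ih =>
    obtain ⟨α, hα, η, hη, _, rfl⟩ := hstep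
    have hmem : MvPolynomial.monomial η (1 : A) * F α ∈ tauF 𝒥 𝒥.tau F :=
      ⟨α, hα, η, hη, rfl⟩
    have hrw : g - (b - MvPolynomial.monomial η (MvPolynomial.coeff (α + η) b) * F α)
        = (g - b) + (MvPolynomial.coeff (α + η) b) •
            (MvPolynomial.monomial η (1 : A) * F α) := by
      rw [← smul_mul_assoc, MvPolynomial.smul_monomial, smul_eq_mul, mul_one]
      ring
    rw [hrw]
    exact Submodule.add_mem _ ih
      (Submodule.smul_mem _ _ (Submodule.subset_span hmem))

lemma tauSpan_le (𝒥 : RedStruct n) (F : Term n → MvPolynomial (Fin n) A) :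
    tauSpan 𝒥 𝒥.tau F ≤ Submodule.restrictScalars A (Ideal.span (F '' ↑𝒥.M)) := by
  apply Submodule.span_le.2
  rintro p ⟨α, hα, η, hη, rfl⟩
  exact Ideal.mul_mem_left _ _ (Ideal.subset_span ⟨α, hα, rfl⟩)

lemma reduced_mem_NJSpan (𝒥 : RedStruct n) {l : MvPolynomial (Fin n) A}
    (hl : IsReducedPoly 𝒥 l) : l ∈ NJSpan 𝒥 A := by
  nth_rewrite 1 [l.as_sum]
  apply Submodule.sum_mem
  intro v hv
  have h1 : MvPolynomial.monomial v (MvPolynomial.coeff v l)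
      = (MvPolynomial.coeff v l) • MvPolynomial.monomial v (1 : A) := by
    rw [MvPolynomial.smul_monomial, smul_eq_mul, mul_one]
  rw [h1]
  exact Submodule.smul_mem _ _ (Submodule.subset_span ⟨v, hl v hv, rfl⟩)

lemma NJSpan_reduced (𝒥 : RedStruct n) {l : MvPolynomial (Fin n) A}
    (hl : l ∈ NJSpan 𝒥 A) : IsReducedPoly 𝒥 l := by
  refine Submodule.span_induction (p := fun x _ => IsReducedPoly 𝒥 x)
    ?_ ?_ ?_ ?_ hl
  · rintro x ⟨β, hβ, rfl⟩ γ hγ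
    rw [MvPolynomial.mem_support_iff, MvPolynomial.coeff_monomial] at hγ
    split_ifs at hγ with h
    · exact h ▸ hβ
    · exact absurd rfl hγ
  · intro β hβ
    simp at hβ
  · intro x y _ _ hx hy β hβ
    rcases Finset.mem_union.1 (MvPolynomial.support_add hβ) with h | h
    · exact hx β h
    · exact hy β h
  · intro a x _ hx β hβ
    exact hx β (Finsupp.support_smul hβ)

/-- From a noetherian relation, every element reaches a normal form. -/
lemma exists_normal {X : Type*} (r : X → X → Prop) (hn : RelNoetherian r) (g : X) :
    ∃ l, Relation.ReflTransGen r g l ∧ ∀ h, ¬ r l h := by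
  by_contra hno
  push_neg at hno
  have key : ∀ x : {x // Relation.ReflTransGen r g x},
      ∃ y : {x // Relation.ReflTransGen r g x}, r x.1 y.1 := by
    rintro ⟨x, hx⟩
    obtain ⟨h, hh⟩ := hno x hx
    exact ⟨⟨h, hx.tail hh⟩, hh⟩
  choose next hnext using key
  apply hn
  refine ⟨fun i => (next^[i] ⟨g, Relation.ReflTransGen.refl⟩).1, fun i => ?_⟩
  simp only [Function.iterate_succ_apply']
  exact hnext _

/-- Existence of a reduced normal form under weak noetherianity. -/
lemma exists_nf (𝒥 : RedStruct n) (hwn : 𝒥.IsWeaklyNoetherianOver A)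
    (F : Term n → MvPolynomial (Fin n) A) (hF : IsMarkedSet 𝒥 F)
    (g : MvPolynomial (Fin n) A) :
    ∃ l, IsReducedPoly 𝒥 l ∧ RedStar 𝒥 F g l := by
  obtain ⟨𝒥', ⟨hM, hlam, htau⟩, hnoeth⟩ := hwn
  have hF' : IsMarkedSet 𝒥' F := by
    intro α hα
    rw [hM] at hα
    obtain ⟨h1, h2⟩ := hF α hα
    exact ⟨h1, fun β hβ => by rw [hlam]; exact h2 β hβ⟩
  obtain ⟨l, hls, hln⟩ := exists_normal _ (hnoeth F hF') g
  have hsub : ∀ x y, Red 𝒥' F x y → Red 𝒥 F x y := by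
    rintro x y ⟨α, hα, η, hη, hc, rfl⟩
    rw [hM] at hα
    exact ⟨α, hα, η, htau α hα hη, hc, rfl⟩
  refine ⟨l, ?_, Relation.ReflTransGen.mono (fun x y => hsub x y) g l hls⟩
  intro β hβ hβJ
  obtain ⟨α, hα, η, rfl⟩ := hβJ
  rw [← hM] at hα
  obtain ⟨α', hα', η', hη', heq⟩ := (𝒥'.cover (α + η)).1 ⟨α, hα, η, rfl⟩
  rw [MvPolynomial.mem_support_iff] at hβ
  exact hln _ ⟨α', hα', η', hη', by rw [← heq]; exact hβ, rfl⟩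

variable (𝒥 : RedStruct n) (F : Term n → MvPolynomial (Fin n) A)

/-- From `0` the only reachable polynomial is `0`. -/
lemma redstar_zero {l : MvPolynomial (Fin n) A} (h : RedStar 𝒥 F 0 l) : l = 0 := by
  rcases Relation.ReflTransGen.cases_head h with h | ⟨c, hc, -⟩
  · exact h.symm
  · obtain ⟨α, hα, η, hη, hc0, rfl⟩ := hc
    simp at hc0

/-- Adding a multiple `x^η a · f_α` (with `η ∈ τ_α`) does not change the set of
reduced normal forms, assuming confluence. -/
lemma redstar_add_gen (hF : IsMarkedSet 𝒥 F)
    (hc : ∀ g : MvPolynomial (Fin n) A,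
      ∃! l : MvPolynomial (Fin n) A, IsReducedPoly 𝒥 l ∧ RedStar 𝒥 F g l)
    {α η : Term n} (hα : α ∈ 𝒥.M) (hη : η ∈ 𝒥.tau α) (a : A)
    (g : MvPolynomial (Fin n) A) {l : MvPolynomial (Fin n) A}
    (hl : IsReducedPoly 𝒥 l) :
    RedStar 𝒥 F (g + MvPolynomial.monomial η a * F α) l ↔ RedStar 𝒥 F g l := by
  classical
  set c := MvPolynomial.coeff (α + η) g with hcdef
  set g'' := g - MvPolynomial.monomial η c * F α with hg''
  have hcoefF : ∀ b : A,
      MvPolynomial.coeff (α + η) (MvPolynomial.monomial η b * F α) = b := by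
    intro b
    rw [add_comm, MvPolynomial.coeff_monomial_mul, (hF α hα).1, mul_one]
  have hred1 : RedStar 𝒥 F g g'' := by
    by_cases h0 : c = 0
    · have he : g'' = g := by rw [hg'', h0]; simp
      rw [he]
      exact Relation.ReflTransGen.refl
    · exact Relation.ReflTransGen.single ⟨α, hα, η, hη, h0, rfl⟩
  have hred2 : RedStar 𝒥 F (g + MvPolynomial.monomial η a * F α) g'' := by
    set h := g + MvPolynomial.monomial η a * F α with hh
    have hch : MvPolynomial.coeff (α + η) h = c + a := by
      rw [hh, MvPolynomial.coeff_add, hcoefF]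
    by_cases h0 : c + a = 0
    · have : h = g'' := by
        rw [hh, hg'']
        have ha : a = -c := by linear_combination h0
        rw [ha, map_neg]
        ring
      rw [this]
      exact Relation.ReflTransGen.refl
    · refine Relation.ReflTransGen.single ⟨α, hα, η, hη, by rw [hch]; exact h0, ?_⟩
      rw [hg'', hh, hch, map_add]
      ring
  obtain ⟨l'', ⟨hl''r, hl''s⟩, -⟩ := hc g''
  constructor
  · intro hs
    have h1 : l = l'' :=
      (hc _).unique ⟨hl, hs⟩ ⟨hl''r, hred2.trans hl''s⟩
    exact h1 ▸ hred1.trans hl''s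
  · intro hs
    have h1 : l = l'' :=
      (hc _).unique ⟨hl, hs⟩ ⟨hl''r, hred1.trans hl''s⟩
    exact h1 ▸ hred2.trans hl''s

/-- Under confluence, elements of `⟨τF⟩` reduce only to `0`. -/
lemma tauSpan_nf_zero (hF : IsMarkedSet 𝒥 F)
    (hc : ∀ g : MvPolynomial (Fin n) A,
      ∃! l : MvPolynomial (Fin n) A, IsReducedPoly 𝒥 l ∧ RedStar 𝒥 F g l)
    {g : MvPolynomial (Fin n) A} (hg : g ∈ tauSpan 𝒥 𝒥.tau F)
    {l : MvPolynomial (Fin n) A} (hl : IsReducedPoly 𝒥 l)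
    (hs : RedStar 𝒥 F g l) : l = 0 := by
  have key : ∀ (x : MvPolynomial (Fin n) A), x ∈ tauSpan 𝒥 𝒥.tau F →
      ∀ (a : A) (h l' : MvPolynomial (Fin n) A), IsReducedPoly 𝒥 l' →
        (RedStar 𝒥 F (h + a • x) l' ↔ RedStar 𝒥 F h l') := by
    intro x hx
    refine Submodule.span_induction (p := fun x _ => ∀ (a : A) (h l' : _),
      IsReducedPoly 𝒥 l' → (RedStar 𝒥 F (h + a • x) l' ↔ RedStar 𝒥 F h l'))
      ?_ ?_ ?_ ?_ hx
    · rintro x ⟨α, hα, η, hη, rfl⟩ a h l' hl'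
      have : a • (MvPolynomial.monomial η (1 : A) * F α)
          = MvPolynomial.monomial η a * F α := by
        rw [← smul_mul_assoc, MvPolynomial.smul_monomial, smul_eq_mul, mul_one]
      rw [this]
      exact redstar_add_gen 𝒥 F hF hc hα hη a h hl'
    · intro a h l' hl'
      simp
    · intro x y _ _ hx hy a h l' hl'
      have : h + a • (x + y) = (h + a • x) + a • y := by
        rw [smul_add]; ring
      rw [this, hy _ _ _ hl', hx _ _ _ hl']
    · intro b x _ hx a h l' hl'
      have : a • b • x = (a * b) • x := by rw [smul_smul]
      rw [this, hx _ _ _ hl']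
  have h1 : RedStar 𝒥 F (0 + (1 : A) • g) l := by simpa using hs
  have h2 : RedStar 𝒥 F 0 l := (key g hg 1 0 l hl).1 h1
  exact redstar_zero 𝒥 F h2

end Auxiliary

/-- over a weakly noetherian RS, a marked basis yields a confluent
reduction; and assuming confluency, being a marked basis is equivalent to
`(F) = ⟨τF⟩` and to all complete reductions of `x^γ f_α`, `x^γ ∉ τ_α`, ending in `0`. -/
theorem stmt12 {n : ℕ} {A : Type} [CommRing A] (𝒥 : RedStruct n)
    (hwn : 𝒥.IsWeaklyNoetherianOver A)
    (F : Term n → MvPolynomial (Fin n) A) (hF : IsMarkedSet 𝒥 F) :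
    (IsMarkedBasis 𝒥 F →
      ∀ g : MvPolynomial (Fin n) A,
        ∃! l : MvPolynomial (Fin n) A, IsReducedPoly 𝒥 l ∧ RedStar 𝒥 F g l) ∧
    ((∀ g : MvPolynomial (Fin n) A,
        ∃! l : MvPolynomial (Fin n) A, IsReducedPoly 𝒥 l ∧ RedStar 𝒥 F g l) →
      ((IsMarkedBasis 𝒥 F ↔
          Submodule.restrictScalars A (Ideal.span (F '' ↑𝒥.M)) = tauSpan 𝒥 𝒥.tau F) ∧
       (IsMarkedBasis 𝒥 F ↔
          ∀ α ∈ 𝒥.M, ∀ γ : Term n, γ ∉ 𝒥.tau α →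
            ∀ l : MvPolynomial (Fin n) A, IsReducedPoly 𝒥 l →
              RedStar 𝒥 F (MvPolynomial.monomial γ (1 : A) * F α) l → l = 0))) := by
  classical
  constructor
  · -- marked basis ⇒ confluence
    intro hb g
    obtain ⟨l, hlr, hls⟩ := exists_nf 𝒥 hwn F hF g
    refine ⟨l, ⟨hlr, hls⟩, ?_⟩
    rintro l' ⟨hl'r, hl's⟩
    have hd : l' - l ∈ Submodule.restrictScalars A (Ideal.span (F '' ↑𝒥.M)) := by
      have : l' - l = (g - l) - (g - l') := by ring
      rw [this]
      exact Submodule.sub_mem _ (tauSpan_le 𝒥 F (redstar_sub_mem 𝒥 F hls))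
        (tauSpan_le 𝒥 F (redstar_sub_mem 𝒥 F hl's))
    have hd2 : l' - l ∈ NJSpan 𝒥 A :=
      Submodule.sub_mem _ (reduced_mem_NJSpan 𝒥 hl'r) (reduced_mem_NJSpan 𝒥 hlr)
    have := Submodule.disjoint_def.1 hb.disjoint _ hd hd2
    exact sub_eq_zero.1 this
  · intro hc
    -- (a → b)
    have hab : IsMarkedBasis 𝒥 F →
        Submodule.restrictScalars A (Ideal.span (F '' ↑𝒥.M)) = tauSpan 𝒥 𝒥.tau F := by
      intro hb
      refine le_antisymm ?_ (tauSpan_le 𝒥 F)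
      intro g hg
      obtain ⟨l, ⟨hlr, hls⟩, -⟩ := hc g
      have hgl : g - l ∈ tauSpan 𝒥 𝒥.tau F := redstar_sub_mem 𝒥 F hls
      have hl1 : l ∈ Submodule.restrictScalars A (Ideal.span (F '' ↑𝒥.M)) := by
        have : l = g - (g - l) := by ring
        rw [this]
        exact Submodule.sub_mem _ hg (tauSpan_le 𝒥 F hgl)
      have hl0 : l = 0 :=
        Submodule.disjoint_def.1 hb.disjoint _ hl1 (reduced_mem_NJSpan 𝒥 hlr)
      have : g = g - l := by rw [hl0, sub_zero]
      rw [this]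
      exact hgl
    -- (b → a)
    have hba : Submodule.restrictScalars A (Ideal.span (F '' ↑𝒥.M)) = tauSpan 𝒥 𝒥.tau F →
        IsMarkedBasis 𝒥 F := by
      intro hb
      constructor
      · rw [Submodule.disjoint_def]
        intro x hx1 hx2
        have hxr : IsReducedPoly 𝒥 x := NJSpan_reduced 𝒥 hx2
        rw [hb] at hx1
        exact tauSpan_nf_zero 𝒥 F hF hc hx1 hxr Relation.ReflTransGen.refl
      · rw [codisjoint_iff, eq_top_iff]
        intro g _
        obtain ⟨l, ⟨hlr, hls⟩, -⟩ := hc g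
        rw [Submodule.mem_sup]
        exact ⟨g - l, tauSpan_le 𝒥 F (redstar_sub_mem 𝒥 F hls),
          l, reduced_mem_NJSpan 𝒥 hlr, by ring⟩
    constructor
    · exact ⟨hab, hba⟩
    constructor
    · -- (a → c)
      intro hb α hα γ _ l hlr hls
      have hmem : MvPolynomial.monomial γ (1 : A) * F α ∈ tauSpan 𝒥 𝒥.tau F := by
        rw [← hab hb]
        exact Ideal.mul_mem_left _ _ (Ideal.subset_span ⟨α, hα, rfl⟩)
      exact tauSpan_nf_zero 𝒥 F hF hc hmem hlr hls
    · -- (c → a)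
      intro hcc
      apply hba
      refine le_antisymm ?_ (tauSpan_le 𝒥 F)
      -- every `x^γ a · f_α` lies in `⟨τF⟩`
      have claim1 : ∀ (γ : Term n) (a : A), ∀ α ∈ 𝒥.M,
          MvPolynomial.monomial γ a * F α ∈ tauSpan 𝒥 𝒥.tau F := by
        intro γ a α hα
        have hrw : MvPolynomial.monomial γ a * F α
            = a • (MvPolynomial.monomial γ (1 : A) * F α) := by
          rw [← smul_mul_assoc, MvPolynomial.smul_monomial, smul_eq_mul, mul_one]
        rw [hrw]
        by_cases hγ : γ ∈ 𝒥.tau α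
        · exact Submodule.smul_mem _ _ (Submodule.subset_span ⟨α, hα, γ, hγ, rfl⟩)
        · obtain ⟨l, ⟨hlr, hls⟩, -⟩ := hc (MvPolynomial.monomial γ (1 : A) * F α)
          have hl0 : l = 0 := hcc α hα γ hγ l hlr hls
          have : MvPolynomial.monomial γ (1 : A) * F α
              = MvPolynomial.monomial γ (1 : A) * F α - l := by rw [hl0, sub_zero]
          exact Submodule.smul_mem _ _ (this ▸ redstar_sub_mem 𝒥 F hls)
      have claim2 : ∀ (p : MvPolynomial (Fin n) A), ∀ α ∈ 𝒥.M,
          p * F α ∈ tauSpan 𝒥 𝒥.tau F := by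
        intro p α hα
        induction p using MvPolynomial.induction_on' with
        | monomial u a => exact claim1 u a α hα
        | add p q hp hq =>
          rw [add_mul]
          exact Submodule.add_mem _ hp hq
      have claim3 : ∀ (p x : MvPolynomial (Fin n) A), x ∈ tauSpan 𝒥 𝒥.tau F →
          p * x ∈ tauSpan 𝒥 𝒥.tau F := by
        intro p x hx
        refine Submodule.span_induction
          (p := fun x _ => p * x ∈ tauSpan 𝒥 𝒥.tau F) ?_ ?_ ?_ ?_ hx
        · rintro x ⟨α, hα, η, hη, rfl⟩
          show p * (MvPolynomial.monomial η (1 : A) * F α) ∈ tauSpan 𝒥 𝒥.tau F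
          rw [← mul_assoc]
          exact claim2 _ α hα
        · show p * 0 ∈ tauSpan 𝒥 𝒥.tau F
          rw [mul_zero]
          exact Submodule.zero_mem _
        · intro x y _ _ hx hy
          show p * (x + y) ∈ tauSpan 𝒥 𝒥.tau F
          rw [mul_add]
          exact Submodule.add_mem _ hx hy
        · intro a x _ hx
          show p * (a • x) ∈ tauSpan 𝒥 𝒥.tau F
          rw [mul_smul_comm]
          exact Submodule.smul_mem _ _ hx
      intro g hg
      have hg' : g ∈ Ideal.span (F '' ↑𝒥.M) := hg
      refine Submodule.span_induction
        (p := fun x _ => x ∈ tauSpan 𝒥 𝒥.tau F) ?_ ?_ ?_ ?_ hg'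
      · rintro x ⟨α, hα, rfl⟩
        have : F α = 1 * F α := (one_mul _).symm
        rw [this]
        exact claim2 1 α hα
      · exact Submodule.zero_mem _
      · intro x y _ _ hx hy
        exact Submodule.add_mem _ hx hy
      · intro a x _ hx
        exact claim3 a x hx
end
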